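/- arXiv:1711.10776 — 12 statements merged into one kernel-verified Lean document; each statement's English description precedes it below -/
import Mathlib

section
/- For all constants a ≥ 0, b ≥ 0, c ≥ 0, the function f(x) = (e^{a·x} − 1)·(e^{b·x} − 1)·e^{c·x} is convex on the interval [0, ∞). -/
open Real Set

private lemma convexOn_exp_mul (a : ℝ) :
    ConvexOn ℝ (Set.Ici (0 : ℝ)) (fun x : ℝ => Real.exp (a * x)) := by
  have h := (convexOn_exp.comp_affineMap (a • (AffineMap.id ℝ ℝ))).subset
    (Set.subset_univ _) (convex_Ici 0)
  have e : (fun x : ℝ => Real.exp (a * x)) = rexp ∘ ⇑(a • AffineMap.id ℝ ℝ) := by funext x; simp [Function.comp]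
  rw [e]; exact h

private lemma monotoneOn_exp_mul {a : ℝ} (ha : 0 ≤ a) :
    MonotoneOn (fun x : ℝ => Real.exp (a * x)) (Set.Ici (0 : ℝ)) := by
  intro x _ y _ hxy
  exact Real.exp_le_exp.2 (by nlinarith)

private lemma nonneg_exp_mul_sub_one {a : ℝ} (ha : 0 ≤ a) {x : ℝ} (hx : x ∈ Set.Ici (0 : ℝ)) :
    0 ≤ Real.exp (a * x) - 1 := by
  have : (0:ℝ) ≤ a * x := mul_nonneg ha hx
  have := Real.one_le_exp this
  linarith

/-- For all constants `a ≥ 0`, `b ≥ 0`, `c ≥ 0`, the function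
`f(x) = (e^{a·x} − 1)·(e^{b·x} − 1)·e^{c·x}` is convex on `[0, ∞)`. -/
theorem stmt_0 (a b c : ℝ) (ha : 0 ≤ a) (hb : 0 ≤ b) (hc : 0 ≤ c) :
    ConvexOn ℝ (Set.Ici (0 : ℝ))
      (fun x : ℝ => (Real.exp (a * x) - 1) * (Real.exp (b * x) - 1) * Real.exp (c * x)) := by
  have hA : ConvexOn ℝ (Set.Ici (0:ℝ)) (fun x : ℝ => Real.exp (a * x) - 1) := by
    have e : (fun x : ℝ => Real.exp (a * x) - 1) = (fun x => Real.exp (a * x)) + fun _ => -1 := by funext x; simp [sub_eq_add_neg]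
    rw [e]; exact (convexOn_exp_mul a).add (convexOn_const (-1) (convex_Ici 0))
  have hB : ConvexOn ℝ (Set.Ici (0:ℝ)) (fun x : ℝ => Real.exp (b * x) - 1) := by
    have e : (fun x : ℝ => Real.exp (b * x) - 1) = (fun x => Real.exp (b * x)) + fun _ => -1 := by funext x; simp [sub_eq_add_neg]
    rw [e]; exact (convexOn_exp_mul b).add (convexOn_const (-1) (convex_Ici 0))
  have hmA : MonotoneOn (fun x : ℝ => Real.exp (a * x) - 1) (Set.Ici (0:ℝ)) :=
    fun x hx y hy hxy => by have := monotoneOn_exp_mul ha hx hy hxy; dsimp only at this ⊢; linarith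
  have hmB : MonotoneOn (fun x : ℝ => Real.exp (b * x) - 1) (Set.Ici (0:ℝ)) :=
    fun x hx y hy hxy => by have := monotoneOn_exp_mul hb hx hy hxy; dsimp only at this ⊢; linarith
  have hAB : ConvexOn ℝ (Set.Ici (0:ℝ))
      (fun x : ℝ => (Real.exp (a * x) - 1) * (Real.exp (b * x) - 1)) := by
    have := hA.mul hB (fun x hx => nonneg_exp_mul_sub_one ha hx)
      (fun x hx => nonneg_exp_mul_sub_one hb hx) (hmA.monovaryOn hmB)
    simpa [Pi.mul_def] using this
  have hmAB : MonotoneOn (fun x : ℝ => (Real.exp (a * x) - 1) * (Real.exp (b * x) - 1))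
      (Set.Ici (0:ℝ)) := by
    intro x hx y hy hxy
    exact mul_le_mul (hmA hx hy hxy) (hmB hx hy hxy) (nonneg_exp_mul_sub_one hb hx)
      (nonneg_exp_mul_sub_one ha hy)
  have := hAB.mul (convexOn_exp_mul c)
    (fun x hx => mul_nonneg (nonneg_exp_mul_sub_one ha hx) (nonneg_exp_mul_sub_one hb hx))
    (fun x _ => (Real.exp_pos _).le)
    (hmAB.monovaryOn (monotoneOn_exp_mul hc))
  simpa [Pi.mul_def] using this
end

section
/- For all constants a ≥ 0, b ≥ 0, c ≥ 0, the function h(t) = t·(e^{a/t} − 1)·(e^{b/t} − 1)·e^{c/t} is convex on (0, ∞). -/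
open Set Real

private lemma expMul_convexOn (a : ℝ) :
    ConvexOn ℝ (Set.Ioi (0:ℝ)) (fun x => Real.exp (a * x)) := by
  refine ⟨convex_Ioi 0, fun x _ y _ p q hp hq hpq => ?_⟩
  have h := convexOn_exp.2 (Set.mem_univ (a * x)) (Set.mem_univ (a * y)) hp hq hpq
  simp only [smul_eq_mul] at h ⊢
  calc Real.exp (a * (p * x + q * y)) = Real.exp (p * (a * x) + q * (a * y)) := by ring_nf
    _ ≤ p * Real.exp (a * x) + q * Real.exp (a * y) := h

private lemma expMul_monoOn {a : ℝ} (ha : 0 ≤ a) :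
    MonotoneOn (fun x => Real.exp (a * x)) (Set.Ioi (0:ℝ)) := by
  intro x _ y _ hxy
  exact Real.exp_le_exp.2 (mul_le_mul_of_nonneg_left hxy ha)

private lemma f_convexOn {a b c : ℝ} (ha : 0 ≤ a) (hb : 0 ≤ b) (hc : 0 ≤ c) :
    ConvexOn ℝ (Set.Ioi (0:ℝ))
      (fun x => (Real.exp (a * x) - 1) * (Real.exp (b * x) - 1) * Real.exp (c * x)) := by
  have hA : ConvexOn ℝ (Set.Ioi (0:ℝ)) (fun x => Real.exp (a * x) - 1) := by
    exact (expMul_convexOn a).sub (concaveOn_const 1 (convex_Ioi 0))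
  have hB : ConvexOn ℝ (Set.Ioi (0:ℝ)) (fun x => Real.exp (b * x) - 1) := by
    exact (expMul_convexOn b).sub (concaveOn_const 1 (convex_Ioi 0))
  have hA0 : ∀ ⦃x⦄, x ∈ Set.Ioi (0:ℝ) → 0 ≤ Real.exp (a * x) - 1 := fun x hx => by
    have : (1:ℝ) ≤ Real.exp (a * x) :=
      Real.one_le_exp (mul_nonneg ha (le_of_lt hx))
    linarith
  have hB0 : ∀ ⦃x⦄, x ∈ Set.Ioi (0:ℝ) → 0 ≤ Real.exp (b * x) - 1 := fun x hx => by
    have : (1:ℝ) ≤ Real.exp (b * x) :=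
      Real.one_le_exp (mul_nonneg hb (le_of_lt hx))
    linarith
  have hAm : MonotoneOn (fun x => Real.exp (a * x) - 1) (Set.Ioi (0:ℝ)) := fun x hx y hy hxy =>
    sub_le_sub_right (expMul_monoOn ha hx hy hxy) 1
  have hBm : MonotoneOn (fun x => Real.exp (b * x) - 1) (Set.Ioi (0:ℝ)) := fun x hx y hy hxy =>
    sub_le_sub_right (expMul_monoOn hb hx hy hxy) 1
  have hAB : ConvexOn ℝ (Set.Ioi (0:ℝ))
      (fun x => (Real.exp (a * x) - 1) * (Real.exp (b * x) - 1)) :=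
    hA.mul hB hA0 hB0 (hAm.monovaryOn hBm)
  have hAB0 : ∀ ⦃x⦄, x ∈ Set.Ioi (0:ℝ) → 0 ≤ (Real.exp (a * x) - 1) * (Real.exp (b * x) - 1) :=
    fun x hx => mul_nonneg (hA0 hx) (hB0 hx)
  have hABm : MonotoneOn (fun x => (Real.exp (a * x) - 1) * (Real.exp (b * x) - 1))
      (Set.Ioi (0:ℝ)) := fun x hx y hy hxy =>
    mul_le_mul (hAm hx hy hxy) (hBm hx hy hxy) (hB0 hx) (le_trans (hA0 hx) (hAm hx hy hxy))
  exact hAB.mul (expMul_convexOn c) hAB0 (fun x _ => (Real.exp_pos _).le)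
    (hABm.monovaryOn (expMul_monoOn hc))

/-- For all constants `a ≥ 0`, `b ≥ 0`, `c ≥ 0`, the function
`h(t) = t·(e^{a/t} − 1)·(e^{b/t} − 1)·e^{c/t}` is convex on `(0, ∞)`. -/
theorem stmt_2 (a b c : ℝ) (ha : 0 ≤ a) (hb : 0 ≤ b) (hc : 0 ≤ c) :
    ConvexOn ℝ (Set.Ioi (0 : ℝ))
      (fun t : ℝ => t * ((Real.exp (a / t) - 1) * (Real.exp (b / t) - 1) * Real.exp (c / t))) := by
  have hf := f_convexOn ha hb hc
  set f : ℝ → ℝ := fun x => (Real.exp (a * x) - 1) * (Real.exp (b * x) - 1) * Real.exp (c * x)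
    with hfdef
  have hrw : ∀ t : ℝ,
      t * ((Real.exp (a / t) - 1) * (Real.exp (b / t) - 1) * Real.exp (c / t)) = t * f t⁻¹ := by
    intro t
    simp [hfdef, div_eq_mul_inv]
  refine ⟨convex_Ioi 0, fun x hx y hy p q hp hq hpq => ?_⟩
  simp only [smul_eq_mul, hrw]
  have hx0 : (0:ℝ) < x := hx
  have hy0 : (0:ℝ) < y := hy
  rcases eq_or_lt_of_le hp with hp0 | hp0
  · have hq1 : q = 1 := by linarith
    simp [← hp0, hq1]
  rcases eq_or_lt_of_le hq with hq0 | hq0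
  · have hp1 : p = 1 := by linarith
    simp [← hq0, hp1]
  have hu : (0:ℝ) < p * x + q * y := by positivity
  set u : ℝ := p * x + q * y with hudef
  have hμν : p * x / u + q * y / u = 1 := by
    field_simp
    exact hudef.symm
  have hcomb : (p * x / u) • x⁻¹ + (q * y / u) • y⁻¹ = u⁻¹ := by
    simp only [smul_eq_mul]
    rw [show p * x / u * x⁻¹ + q * y / u * y⁻¹ = (p + q) / u by field_simp, hpq, one_div]
  have key := hf.2 (Set.mem_Ioi.2 (inv_pos.2 hx0)) (Set.mem_Ioi.2 (inv_pos.2 hy0))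
    (by positivity : 0 ≤ p * x / u) (by positivity : 0 ≤ q * y / u) hμν
  rw [hcomb] at key
  simp only [smul_eq_mul] at key
  have := mul_le_mul_of_nonneg_left key hu.le
  calc u * f u⁻¹ ≤ u * (p * x / u * f x⁻¹ + q * y / u * f y⁻¹) := this
    _ = p * (x * f x⁻¹) + q * (y * f y⁻¹) := by
        field_simp
end

section
/- The NOMA per-device energy function E(t) is convex on (0, ∞). -/
open Set Finset Real

/-- Perspective-type lemma: if `g` is convex on `(0,∞)`, so is `t ↦ t * g t⁻¹`. -/
lemma perspective_convexOn {g : ℝ → ℝ} (hg : ConvexOn ℝ (Set.Ioi 0) g) :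
    ConvexOn ℝ (Set.Ioi 0) (fun t => t * g t⁻¹) := by
  refine ⟨convex_Ioi 0, ?_⟩
  intro x hx y hy α β hα hβ hαβ
  simp only [smul_eq_mul]
  have hx0 : (0:ℝ) < x := hx
  have hy0 : (0:ℝ) < y := hy
  have hs : 0 < α * x + β * y := by
    rcases hα.lt_or_eq with h | h
    · have : 0 ≤ β * y := mul_nonneg hβ hy0.le
      nlinarith
    · have hβ1 : β = 1 := by linarith
      simpa [← h, hβ1] using hy0
  have ha' : 0 ≤ α * x / (α * x + β * y) := by positivity
  have hb' : 0 ≤ β * y / (α * x + β * y) := by positivity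
  have hab' : α * x / (α * x + β * y) + β * y / (α * x + β * y) = 1 := by
    field_simp
  have key := hg.2 (mem_Ioi.2 (inv_pos.2 hx0)) (mem_Ioi.2 (inv_pos.2 hy0)) ha' hb' hab'
  simp only [smul_eq_mul] at key
  have hpt : α * x / (α * x + β * y) * x⁻¹ + β * y / (α * x + β * y) * y⁻¹
      = (α * x + β * y)⁻¹ := by
    have e1 : α * x / (α * x + β * y) * x⁻¹ = α / (α * x + β * y) := by
      rw [div_mul_eq_mul_div, mul_assoc, mul_inv_cancel₀ hx0.ne', mul_one]
    have e2 : β * y / (α * x + β * y) * y⁻¹ = β / (α * x + β * y) := by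
      rw [div_mul_eq_mul_div, mul_assoc, mul_inv_cancel₀ hy0.ne', mul_one]
    rw [e1, e2, ← add_div, hαβ, one_div]
  rw [hpt] at key
  have := mul_le_mul_of_nonneg_left key hs.le
  calc (α * x + β * y) * g (α * x + β * y)⁻¹
      ≤ (α * x + β * y) * (α * x / (α * x + β * y) * g x⁻¹
          + β * y / (α * x + β * y) * g y⁻¹) := this
    _ = α * (x * g x⁻¹) + β * (y * g y⁻¹) := by
        field_simp

lemma convexOn_finset_sum {ι : Type*} (s : Finset ι) {t : Set ℝ} (ht : Convex ℝ t)
    (f : ι → ℝ → ℝ) (h : ∀ i ∈ s, ConvexOn ℝ t (f i)) :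
    ConvexOn ℝ t (fun x => ∑ i ∈ s, f i x) := by
  induction s using Finset.cons_induction with
  | empty => simpa using convexOn_const 0 ht
  | cons i s hi ih =>
      simp only [Finset.sum_cons]
      exact (h i (Finset.mem_cons_self i s)).add
        (ih fun j hj => h j (Finset.mem_cons_of_mem hj))

/-- `x ↦ exp (c*x) - 1` is convex, monotone and nonneg on `(0,∞)` when `0 ≤ c`. -/
lemma convexOn_expm1 (c : ℝ) : ConvexOn ℝ (Set.Ioi 0) (fun x => Real.exp (c * x) - 1) := by
  have h1 : ConvexOn ℝ Set.univ (fun x : ℝ => Real.exp (c * x)) := by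
    have := convexOn_exp.comp_affineMap (c • (AffineMap.id ℝ ℝ))
    simpa [Function.comp_def] using this
  have := (h1.subset (Set.subset_univ _) (convex_Ioi 0)).add_const (-1)
  simpa [sub_eq_add_neg, Pi.add_def] using this

lemma monotoneOn_expm1 {c : ℝ} (hc : 0 ≤ c) :
    MonotoneOn (fun x => Real.exp (c * x) - 1) (Set.Ioi 0) := by
  intro x _ y _ hxy
  have : c * x ≤ c * y := mul_le_mul_of_nonneg_left hxy hc
  simpa using Real.exp_le_exp.2 this

lemma nonneg_expm1 {c : ℝ} (hc : 0 ≤ c) {x : ℝ} (hx : x ∈ Set.Ioi (0:ℝ)) :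
    0 ≤ Real.exp (c * x) - 1 := by
  have : (0:ℝ) ≤ c * x := mul_nonneg hc (le_of_lt hx)
  simpa using Real.one_le_exp this

lemma convexOn_exp_lin (c : ℝ) : ConvexOn ℝ (Set.Ioi 0) (fun x => Real.exp (c * x)) := by
  have h1 : ConvexOn ℝ Set.univ (fun x : ℝ => Real.exp (c * x)) := by
    have := convexOn_exp.comp_affineMap (c • (AffineMap.id ℝ ℝ))
    simpa [Function.comp_def] using this
  exact h1.subset (Set.subset_univ _) (convex_Ioi 0)

lemma monotoneOn_exp_lin {c : ℝ} (hc : 0 ≤ c) :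
    MonotoneOn (fun x => Real.exp (c * x)) (Set.Ioi 0) := by
  intro x _ y _ hxy
  exact Real.exp_le_exp.2 (mul_le_mul_of_nonneg_left hxy hc)

/-- Product of three "expm1/exp" factors is convex on `(0,∞)`. -/
lemma convexOn_term {c₁ c₂ c₃ : ℝ} (h1 : 0 ≤ c₁) (h2 : 0 ≤ c₂) (h3 : 0 ≤ c₃) :
    ConvexOn ℝ (Set.Ioi 0)
      (fun x => (Real.exp (c₁ * x) - 1) * (Real.exp (c₂ * x) - 1) * Real.exp (c₃ * x)) := by
  have hm12 : ConvexOn ℝ (Set.Ioi 0)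
      ((fun x => Real.exp (c₁ * x) - 1) * (fun x => Real.exp (c₂ * x) - 1)) :=
    (convexOn_expm1 c₁).mul (convexOn_expm1 c₂) (fun x hx => nonneg_expm1 h1 hx)
      (fun x hx => nonneg_expm1 h2 hx)
      ((monotoneOn_expm1 h1).monovaryOn (monotoneOn_expm1 h2))
  have hm12' : MonotoneOn
      ((fun x => Real.exp (c₁ * x) - 1) * (fun x => Real.exp (c₂ * x) - 1)) (Set.Ioi 0) := by
    intro x hx y hy hxy
    simp only [Pi.mul_apply]
    exact mul_le_mul (monotoneOn_expm1 h1 hx hy hxy) (monotoneOn_expm1 h2 hx hy hxy)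
      (nonneg_expm1 h2 hx) (nonneg_expm1 h1 hy)
  have := hm12.mul (convexOn_exp_lin c₃)
    (fun x hx => mul_nonneg (nonneg_expm1 h1 hx) (nonneg_expm1 h2 hx))
    (fun x _ => (Real.exp_pos _).le)
    (hm12'.monovaryOn (monotoneOn_exp_lin h3))
  simpa [Pi.mul_def, mul_assoc] using this

/-- The NOMA per-device energy function `E(t)` is convex on `(0, ∞)`.
Here `a l = (ln 2)·D l / B`, `b l = (ln 2)·(Σ_{s=j+1}^{l−1} D s)/B`, and
`E(t) = (σ²·t/(η·h²))·[ Σ_{l=j+1}^{J} (e^{a_l/t} − 1)(e^{a_j/t} − 1)e^{b_{jl}/t}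
        + (e^{a_j/t} − 1) ] + t·P^C`. -/
theorem stmt_3 (j J : ℕ) (hjJ : j ≤ J)
    (D : ℕ → ℝ) (hD : ∀ l, j ≤ l → l ≤ J → 0 < D l)
    (B σ2 h η PC : ℝ) (hB : 0 < B) (hσ2 : 0 < σ2) (hh : 0 < h)
    (hη0 : 0 < η) (hη1 : η ≤ 1) (hPC : 0 ≤ PC)
    (a : ℕ → ℝ) (ha : ∀ l, a l = Real.log 2 * D l / B)
    (b : ℕ → ℝ) (hb : ∀ l, b l = Real.log 2 * (∑ s ∈ Finset.Ico (j + 1) l, D s) / B)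
    (E : ℝ → ℝ)
    (hE : ∀ t : ℝ, E t =
      σ2 * t / (η * h ^ 2) *
        ((∑ l ∈ Finset.Icc (j + 1) J,
            (Real.exp (a l / t) - 1) * (Real.exp (a j / t) - 1) * Real.exp (b l / t))
          + (Real.exp (a j / t) - 1)) + t * PC) :
    ConvexOn ℝ (Set.Ioi (0 : ℝ)) E := by
  have hlog2 : (0:ℝ) < Real.log 2 := Real.log_pos (by norm_num)
  have haj : 0 ≤ a j := by
    rw [ha]; exact le_of_lt (div_pos (mul_pos hlog2 (hD j le_rfl hjJ)) hB)
  have hal : ∀ l ∈ Finset.Icc (j+1) J, 0 ≤ a l := by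
    intro l hl
    rw [Finset.mem_Icc] at hl
    rw [ha]
    exact le_of_lt (div_pos (mul_pos hlog2 (hD l (le_trans (Nat.le_succ j) hl.1) hl.2)) hB)
  have hbl : ∀ l ∈ Finset.Icc (j+1) J, 0 ≤ b l := by
    intro l hl
    rw [Finset.mem_Icc] at hl
    rw [hb]
    have hsum : 0 ≤ ∑ s ∈ Finset.Ico (j + 1) l, D s := by
      apply Finset.sum_nonneg
      intro s hs
      rw [Finset.mem_Ico] at hs
      exact le_of_lt (hD s (le_trans (Nat.le_succ j) hs.1)
        (le_trans (Nat.le_of_lt hs.2) hl.2))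
    positivity
  set G : ℝ → ℝ := fun x =>
    (∑ l ∈ Finset.Icc (j+1) J,
      (Real.exp (a l * x) - 1) * (Real.exp (a j * x) - 1) * Real.exp (b l * x))
    + (Real.exp (a j * x) - 1) with hG
  have hGconv : ConvexOn ℝ (Set.Ioi 0) G := by
    apply ConvexOn.add
    · exact convexOn_finset_sum _ (convex_Ioi 0) _
        (fun l hl => convexOn_term (hal l hl) haj (hbl l hl))
    · exact convexOn_expm1 (a j)
  have hC : 0 ≤ σ2 / (η * h ^ 2) := by positivity
  have hF : ConvexOn ℝ (Set.Ioi 0)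
      (fun t => σ2 / (η * h ^ 2) * (t * G t⁻¹) + PC * t) := by
    apply ConvexOn.add
    · exact (perspective_convexOn hGconv).smul hC
    · exact (convexOn_id (convex_Ioi 0)).smul hPC
  apply hF.congr
  intro t ht
  have ht0 : (t:ℝ) ≠ 0 := ne_of_gt ht
  rw [hE t, hG]
  simp only [div_eq_mul_inv]
  ring
end

section
/- If the circuit power satisfies P^C = 0, then the NOMA per-device energy function E(t) is strictly decreasing on (0, ∞). -/
open Filter

/-- Slope lemma: `(exp u - 1)/u` is strictly increasing for `u > 0`. -/
private lemma exp_slope_lt {u v : ℝ} (hu : 0 < u) (huv : u < v) :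
    (Real.exp u - 1) / u < (Real.exp v - 1) / v := by
  have := strictConvexOn_exp.secant_strict_mono (a := 0) (x := u) (y := v)
    trivial trivial trivial (ne_of_gt hu) (ne_of_gt (hu.trans huv)) huv
  simpa [Real.exp_zero] using this

/-- `t * (exp (a/t) - 1)` is strictly decreasing on positive `t`, for `a > 0`. -/
private lemma g_strict_anti {a x y : ℝ} (ha : 0 < a) (hx : 0 < x) (hxy : x < y) :
    y * (Real.exp (a / y) - 1) < x * (Real.exp (a / x) - 1) := by
  have hy : 0 < y := hx.trans hxy
  have h1 : a / y < a / x := div_lt_div_of_pos_left ha hx hxy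
  have h2 : 0 < a / y := div_pos ha hy
  have key := exp_slope_lt h2 h1
  have e1 : (Real.exp (a / y) - 1) / (a / y) = y * (Real.exp (a / y) - 1) / a := by
    field_simp
  have e2 : (Real.exp (a / x) - 1) / (a / x) = x * (Real.exp (a / x) - 1) / a := by
    field_simp
  rw [e1, e2, div_lt_div_iff_of_pos_right ha] at key
  exact key

/-- NOMA per-device energy function: statement 4 of the paper. -/
theorem stmt_4 (j J : ℕ) (hjJ : j ≤ J)
    (D : ℕ → ℝ) (hD : ∀ l, j ≤ l → l ≤ J → 0 < D l)
    (B σ2 h η PC : ℝ) (hB : 0 < B) (hσ2 : 0 < σ2) (hh : 0 < h)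
    (hη0 : 0 < η) (hη1 : η ≤ 1) (hPC : PC = 0)
    (a : ℕ → ℝ) (ha : ∀ l, a l = Real.log 2 * D l / B)
    (b : ℕ → ℝ) (hb : ∀ l, b l = Real.log 2 * (∑ s ∈ Finset.Ico (j + 1) l, D s) / B)
    (E : ℝ → ℝ)
    (hE : ∀ t : ℝ, E t =
      σ2 * t / (η * h ^ 2) *
        ((∑ l ∈ Finset.Icc (j + 1) J,
            (Real.exp (a l / t) - 1) * (Real.exp (a j / t) - 1) * Real.exp (b l / t))
          + (Real.exp (a j / t) - 1)) + t * PC) :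
    StrictAntiOn E (Set.Ioi (0 : ℝ)) := by
  have hlog2 : (0 : ℝ) < Real.log 2 := Real.log_pos (by norm_num)
  -- positivity of a l for j ≤ l ≤ J
  have hapos : ∀ l, j ≤ l → l ≤ J → 0 < a l := fun l h1 h2 => by
    rw [ha l]; exact div_pos (mul_pos hlog2 (hD l h1 h2)) hB
  have hbnonneg : ∀ l, l ≤ J → 0 ≤ b l := fun l hl => by
    rw [hb l]
    apply div_nonneg _ hB.le
    apply mul_nonneg hlog2.le
    apply Finset.sum_nonneg
    intro s hs
    simp only [Finset.mem_Ico] at hs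
    exact (hD s (le_of_lt (Nat.lt_of_succ_le hs.1)) (le_trans (le_of_lt hs.2) hl)).le
  intro x hx y hy hxy
  simp only [Set.mem_Ioi] at hx hy
  have hc : 0 < σ2 / (η * h ^ 2) := div_pos hσ2 (mul_pos hη0 (pow_pos hh 2))
  -- Rewrite E t as c * (sum of products + g t)
  have hErw : ∀ t : ℝ, E t = σ2 / (η * h ^ 2) *
      ((∑ l ∈ Finset.Icc (j + 1) J,
          (Real.exp (a l / t) - 1) * (t * (Real.exp (a j / t) - 1)) * Real.exp (b l / t))
        + t * (Real.exp (a j / t) - 1)) := by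
    intro t
    rw [hE t, hPC, mul_zero, add_zero, mul_add, mul_add, Finset.mul_sum, Finset.mul_sum]
    congr 1
    · exact Finset.sum_congr rfl fun l _ => by ring
    · ring
  rw [hErw x, hErw y]
  apply mul_lt_mul_of_pos_left _ hc
  have hgj : y * (Real.exp (a j / y) - 1) < x * (Real.exp (a j / x) - 1) :=
    g_strict_anti (hapos j le_rfl hjJ) hx hxy
  have hgjpos : 0 < y * (Real.exp (a j / y) - 1) := by
    apply mul_pos hy
    have h1 : 1 < Real.exp (a j / y) := by
      rw [← Real.exp_zero]
      exact Real.exp_lt_exp.2 (div_pos (hapos j le_rfl hjJ) hy)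
    linarith
  have hgxpos : 0 < x * (Real.exp (a j / x) - 1) := hgjpos.trans hgj
  apply add_lt_add_of_le_of_lt _ hgj
  apply Finset.sum_le_sum
  intro l hl
  simp only [Finset.mem_Icc] at hl
  have hal : 0 < a l := hapos l (le_trans (Nat.le_succ j) hl.1) hl.2
  have hbl : 0 ≤ b l := hbnonneg l hl.2
  have hA : Real.exp (a l / y) - 1 < Real.exp (a l / x) - 1 := by
    have : a l / y < a l / x := div_lt_div_of_pos_left hal hx hxy
    simpa using Real.exp_lt_exp.2 this
  have hApos : 0 < Real.exp (a l / y) - 1 := by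
    have h1 : 1 < Real.exp (a l / y) := by
      rw [← Real.exp_zero]
      exact Real.exp_lt_exp.2 (div_pos hal hy)
    linarith
  have hAxpos : 0 < Real.exp (a l / x) - 1 := hApos.trans hA
  have hC : Real.exp (b l / y) ≤ Real.exp (b l / x) := by
    apply Real.exp_le_exp.2
    exact div_le_div_of_nonneg_left hbl hx hxy.le
  have hCpos : 0 < Real.exp (b l / y) := Real.exp_pos _
  calc (Real.exp (a l / y) - 1) * (y * (Real.exp (a j / y) - 1)) * Real.exp (b l / y)
      ≤ (Real.exp (a l / x) - 1) * (x * (Real.exp (a j / x) - 1)) * Real.exp (b l / x) := by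
        exact mul_le_mul (mul_le_mul hA.le hgj.le hgjpos.le hAxpos.le) hC hCpos.le
          (mul_nonneg hAxpos.le hgxpos.le)
end

section
/- If the circuit power satisfies P^C > 0, then there exists a unique T* > 0 such that the derivative of the NOMA per-device energy function E vanishes at T*; moreover E is strictly decreasing on (0, T*) and strictly increasing on (T*, ∞), so T* is the unique minimizer of E on (0, ∞). -/
open Filter

section NomaAux
open Real

open Filter Real

noncomputable def nomaG0 (p q r x : ℝ) : ℝ :=
  (exp (p * x) - 1) * ((exp (q * x) - 1) * exp (r * x))

noncomputable def nomaG1 (p q r x : ℝ) : ℝ :=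
  p * exp (p * x) * ((exp (q * x) - 1) * exp (r * x)) +
    (exp (p * x) - 1) * (q * exp (q * x) * exp (r * x) + (exp (q * x) - 1) * (r * exp (r * x)))

noncomputable def nomaG2 (p q r x : ℝ) : ℝ :=
  (p * (p * exp (p * x)) * ((exp (q * x) - 1) * exp (r * x)) +
      p * exp (p * x) * (q * exp (q * x) * exp (r * x) + (exp (q * x) - 1) * (r * exp (r * x)))) +
    (p * exp (p * x) * (q * exp (q * x) * exp (r * x) + (exp (q * x) - 1) * (r * exp (r * x))) +
      (exp (p * x) - 1) *
        ((q * (q * exp (q * x)) * exp (r * x) + q * exp (q * x) * (r * exp (r * x))) +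
          (q * exp (q * x) * (r * exp (r * x)) + (exp (q * x) - 1) * (r * (r * exp (r * x))))))

lemma nomaExp_hasDerivAt (p x : ℝ) :
    HasDerivAt (fun y => exp (p * y)) (p * exp (p * x)) x := by
  have := (Real.hasDerivAt_exp (p * x)).comp x ((hasDerivAt_id x).const_mul p)
  rw [show p * exp (p * x) = exp (p * x) * (p * 1) by ring]
  exact this

lemma nomaG0_hasDerivAt (p q r x : ℝ) :
    HasDerivAt (fun y => nomaG0 p q r y) (nomaG1 p q r x) x := by
  have hu := (nomaExp_hasDerivAt p x).sub_const 1
  have hv := ((nomaExp_hasDerivAt q x).sub_const 1).mul (nomaExp_hasDerivAt r x)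
  simpa [nomaG0, nomaG1, Pi.mul_def] using hu.mul hv

lemma nomaG1_hasDerivAt (p q r x : ℝ) :
    HasDerivAt (fun y => nomaG1 p q r y) (nomaG2 p q r x) x := by
  have hu := (nomaExp_hasDerivAt p x).sub_const 1
  have hv := ((nomaExp_hasDerivAt q x).sub_const 1).mul (nomaExp_hasDerivAt r x)
  have hup := (nomaExp_hasDerivAt p x).const_mul p
  have hA := hup.mul hv
  have hw1 := ((nomaExp_hasDerivAt q x).const_mul q).mul (nomaExp_hasDerivAt r x)
  have hw2 := ((nomaExp_hasDerivAt q x).sub_const 1).mul ((nomaExp_hasDerivAt r x).const_mul r)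
  have hB := hu.mul (hw1.add hw2)
  simpa [nomaG1, nomaG2, Pi.mul_def, Pi.add_def] using hA.add hB

lemma nomaG2_nonneg {p q r x : ℝ} (hp : 0 ≤ p) (hq : 0 ≤ q) (hr : 0 ≤ r) (hx : 0 ≤ x) :
    0 ≤ nomaG2 p q r x := by
  have h1 : (0:ℝ) ≤ exp (p * x) - 1 := by
    have := Real.one_le_exp (mul_nonneg hp hx); linarith
  have h2 : (0:ℝ) ≤ exp (q * x) - 1 := by
    have := Real.one_le_exp (mul_nonneg hq hx); linarith
  have hE : ∀ c : ℝ, (0:ℝ) ≤ exp c := fun c => (Real.exp_pos c).le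
  unfold nomaG2
  repeat' apply_rules [add_nonneg, mul_nonneg, h1, h2, hp, hq, hr, hE]

lemma nomaG0_zero (p q r : ℝ) : nomaG0 p q r 0 = 0 := by simp [nomaG0]

noncomputable def nomaF (j J : ℕ) (a b : ℕ → ℝ) (x : ℝ) : ℝ :=
  (∑ l ∈ Finset.Icc (j + 1) J, nomaG0 (a l) (a j) (b l) x) + (exp (a j * x) - 1)

noncomputable def nomaF1 (j J : ℕ) (a b : ℕ → ℝ) (x : ℝ) : ℝ :=
  (∑ l ∈ Finset.Icc (j + 1) J, nomaG1 (a l) (a j) (b l) x) + a j * exp (a j * x)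

noncomputable def nomaF2 (j J : ℕ) (a b : ℕ → ℝ) (x : ℝ) : ℝ :=
  (∑ l ∈ Finset.Icc (j + 1) J, nomaG2 (a l) (a j) (b l) x) + a j * (a j * exp (a j * x))

lemma nomaF_hasDerivAt (j J : ℕ) (a b : ℕ → ℝ) (x : ℝ) :
    HasDerivAt (nomaF j J a b) (nomaF1 j J a b x) x := by
  have hs : HasDerivAt (fun y => ∑ l ∈ Finset.Icc (j + 1) J, nomaG0 (a l) (a j) (b l) y)
      (∑ l ∈ Finset.Icc (j + 1) J, nomaG1 (a l) (a j) (b l) x) x :=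
    HasDerivAt.fun_sum fun l _ => nomaG0_hasDerivAt (a l) (a j) (b l) x
  have he := (nomaExp_hasDerivAt (a j) x).sub_const 1
  exact hs.add he

lemma nomaF1_hasDerivAt (j J : ℕ) (a b : ℕ → ℝ) (x : ℝ) :
    HasDerivAt (nomaF1 j J a b) (nomaF2 j J a b x) x := by
  have hs : HasDerivAt (fun y => ∑ l ∈ Finset.Icc (j + 1) J, nomaG1 (a l) (a j) (b l) y)
      (∑ l ∈ Finset.Icc (j + 1) J, nomaG2 (a l) (a j) (b l) x) x :=
    HasDerivAt.fun_sum fun l _ => nomaG1_hasDerivAt (a l) (a j) (b l) x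
  have he := (nomaExp_hasDerivAt (a j) x).const_mul (a j)
  exact hs.add he

lemma nomaF2_pos (j J : ℕ) (a b : ℕ → ℝ) (x : ℝ)
    (haj : 0 < a j) (hal : ∀ l ∈ Finset.Icc (j + 1) J, 0 ≤ a l)
    (hbl : ∀ l ∈ Finset.Icc (j + 1) J, 0 ≤ b l) (hx : 0 ≤ x) :
    0 < nomaF2 j J a b x := by
  have hsum : 0 ≤ ∑ l ∈ Finset.Icc (j + 1) J, nomaG2 (a l) (a j) (b l) x :=
    Finset.sum_nonneg fun l hl => nomaG2_nonneg (hal l hl) haj.le (hbl l hl) hx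
  have : 0 < a j * (a j * exp (a j * x)) := by positivity
  unfold nomaF2; linarith

lemma nomaF_zero (j J : ℕ) (a b : ℕ → ℝ) : nomaF j J a b 0 = 0 := by
  simp [nomaF, nomaG0]

/-- F x - x F' x ≤ 0 for the pure-sum part is packaged via the full combination. -/
noncomputable def nomaPhi (j J : ℕ) (a b : ℕ → ℝ) (x : ℝ) : ℝ :=
  (∑ l ∈ Finset.Icc (j + 1) J, nomaG0 (a l) (a j) (b l) x) -
    x * (∑ l ∈ Finset.Icc (j + 1) J, nomaG1 (a l) (a j) (b l) x)

lemma nomaPhi_hasDerivAt (j J : ℕ) (a b : ℕ → ℝ) (x : ℝ) :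
    HasDerivAt (nomaPhi j J a b)
      (-(x * ∑ l ∈ Finset.Icc (j + 1) J, nomaG2 (a l) (a j) (b l) x)) x := by
  have hs0 : HasDerivAt (fun y => ∑ l ∈ Finset.Icc (j + 1) J, nomaG0 (a l) (a j) (b l) y)
      (∑ l ∈ Finset.Icc (j + 1) J, nomaG1 (a l) (a j) (b l) x) x :=
    HasDerivAt.fun_sum fun l _ => nomaG0_hasDerivAt (a l) (a j) (b l) x
  have hs1 : HasDerivAt (fun y => ∑ l ∈ Finset.Icc (j + 1) J, nomaG1 (a l) (a j) (b l) y)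
      (∑ l ∈ Finset.Icc (j + 1) J, nomaG2 (a l) (a j) (b l) x) x :=
    HasDerivAt.fun_sum fun l _ => nomaG1_hasDerivAt (a l) (a j) (b l) x
  have h := hs0.sub ((hasDerivAt_id x).mul hs1)
  have e : (∑ l ∈ Finset.Icc (j + 1) J, nomaG1 (a l) (a j) (b l) x) -
      (1 * (∑ l ∈ Finset.Icc (j + 1) J, nomaG1 (a l) (a j) (b l) x) +
        x * ∑ l ∈ Finset.Icc (j + 1) J, nomaG2 (a l) (a j) (b l) x) =
      -(x * ∑ l ∈ Finset.Icc (j + 1) J, nomaG2 (a l) (a j) (b l) x) := by ring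
  exact e ▸ h

lemma nomaPhi_nonpos (j J : ℕ) (a b : ℕ → ℝ) (x : ℝ)
    (haj : 0 < a j) (hal : ∀ l ∈ Finset.Icc (j + 1) J, 0 ≤ a l)
    (hbl : ∀ l ∈ Finset.Icc (j + 1) J, 0 ≤ b l) (hx : 0 ≤ x) :
    nomaPhi j J a b x ≤ 0 := by
  have hanti : AntitoneOn (nomaPhi j J a b) (Set.Ici 0) := by
    apply antitoneOn_of_deriv_nonpos (convex_Ici 0)
    · exact fun y _ => (nomaPhi_hasDerivAt j J a b y).continuousAt.continuousWithinAt
    · exact fun y _ => (nomaPhi_hasDerivAt j J a b y).differentiableAt.differentiableWithinAt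
    · intro y hy
      rw [interior_Ici] at hy
      rw [(nomaPhi_hasDerivAt j J a b y).deriv]
      have hsum : 0 ≤ ∑ l ∈ Finset.Icc (j + 1) J, nomaG2 (a l) (a j) (b l) y :=
        Finset.sum_nonneg fun l hl => nomaG2_nonneg (hal l hl) haj.le (hbl l hl) (le_of_lt hy)
      have := mul_nonneg (le_of_lt hy) hsum
      linarith
  have h0 : nomaPhi j J a b 0 = 0 := by simp [nomaPhi, nomaG0]
  have := hanti (Set.self_mem_Ici) hx hx
  rwa [h0] at this


lemma nomaF_sub_phi (j J : ℕ) (a b : ℕ → ℝ) (x : ℝ) :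
    nomaF j J a b x - x * nomaF1 j J a b x =
      nomaPhi j J a b x + (exp (a j * x) - 1 - x * (a j * exp (a j * x))) := by
  unfold nomaF nomaF1 nomaPhi; ring

lemma nomaG0_eq (p q r x : ℝ) :
    nomaG0 p q r x = (exp (p * x) - 1) * ((exp (q * x) - 1) * exp (r * x)) := rfl

lemma nomaF_eq (j J : ℕ) (a b : ℕ → ℝ) (x : ℝ) :
    nomaF j J a b x =
      (∑ l ∈ Finset.Icc (j + 1) J, nomaG0 (a l) (a j) (b l) x) + (exp (a j * x) - 1) := rfl

noncomputable def nomaH (C PC : ℝ) (j J : ℕ) (a b : ℕ → ℝ) (x : ℝ) : ℝ :=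
  C * (nomaF j J a b x - x * nomaF1 j J a b x) + PC

lemma nomaH_eq (C PC : ℝ) (j J : ℕ) (a b : ℕ → ℝ) (x : ℝ) :
    nomaH C PC j J a b x = C * (nomaF j J a b x - x * nomaF1 j J a b x) + PC := rfl


lemma nomaH_hasDerivAt (C PC : ℝ) (j J : ℕ) (a b : ℕ → ℝ) (x : ℝ) :
    HasDerivAt (nomaH C PC j J a b) (-(C * (x * nomaF2 j J a b x))) x := by
  have h := (((nomaF_hasDerivAt j J a b x).sub
      ((hasDerivAt_id x).mul (nomaF1_hasDerivAt j J a b x))).const_mul C).add_const PC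
  have e : C * (nomaF1 j J a b x - (1 * nomaF1 j J a b x + x * nomaF2 j J a b x)) =
      -(C * (x * nomaF2 j J a b x)) := by ring
  exact e ▸ h

/-- strict antitonicity of H on [0, ∞) -/
lemma nomaH_strictAnti (C PC : ℝ) (hC : 0 < C) (j J : ℕ) (a b : ℕ → ℝ)
    (haj : 0 < a j) (hal : ∀ l ∈ Finset.Icc (j + 1) J, 0 ≤ a l)
    (hbl : ∀ l ∈ Finset.Icc (j + 1) J, 0 ≤ b l) :
    StrictAntiOn (nomaH C PC j J a b) (Set.Ici 0) := by
  apply strictAntiOn_of_deriv_neg (convex_Ici 0)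
  · exact fun y _ => (nomaH_hasDerivAt C PC j J a b y).continuousAt.continuousWithinAt
  · intro y hy
    rw [interior_Ici] at hy
    rw [(nomaH_hasDerivAt C PC j J a b y).deriv]
    have := nomaF2_pos j J a b y haj hal hbl hy.le
    have : 0 < C * (y * nomaF2 j J a b y) := by
      apply mul_pos hC (mul_pos hy this)
    linarith

lemma nomaH_zero (C PC : ℝ) (j J : ℕ) (a b : ℕ → ℝ) :
    nomaH C PC j J a b 0 = PC := by
  simp [nomaH, nomaF_zero]

lemma nomaH_neg (C PC : ℝ) (hC : 0 < C) (hPC : 0 < PC) (j J : ℕ) (a b : ℕ → ℝ)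
    (haj : 0 < a j) (hal : ∀ l ∈ Finset.Icc (j + 1) J, 0 ≤ a l)
    (hbl : ∀ l ∈ Finset.Icc (j + 1) J, 0 ≤ b l) :
    nomaH C PC j J a b ((PC / C + 2) / a j) < 0 := by
  set x := (PC / C + 2) / a j with hxdef
  have hx : 0 ≤ x := by positivity
  have hcx : a j * x = PC / C + 2 := by
    rw [hxdef]; field_simp
  have hA : 1 ≤ exp (a j * x) := Real.one_le_exp (by rw [hcx]; positivity)
  have hphi := nomaPhi_nonpos j J a b x haj hal hbl hx
  have hkey := nomaF_sub_phi j J a b x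
  set A := exp (a j * x) with hAdef
  have h1 : x * (a j * A) = (PC / C + 2) * A := by
    rw [← hcx]; ring
  have h2 : C * (PC / C) = PC := by field_simp
  rw [nomaH, hkey, h1]
  nlinarith [mul_nonpos_of_nonneg_of_nonpos hC.le hphi,
    mul_le_mul_of_nonneg_left hA hC.le, mul_le_mul_of_nonneg_left hA hPC.le]

/-- NOMA per-device energy function: statement 5 of the paper. -/
theorem stmt_5 (j J : ℕ) (hjJ : j ≤ J)
    (D : ℕ → ℝ) (hD : ∀ l, j ≤ l → l ≤ J → 0 < D l)
    (B σ2 h η PC : ℝ) (hB : 0 < B) (hσ2 : 0 < σ2) (hh : 0 < h)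
    (hη0 : 0 < η) (hη1 : η ≤ 1) (hPC : 0 < PC)
    (a : ℕ → ℝ) (ha : ∀ l, a l = Real.log 2 * D l / B)
    (b : ℕ → ℝ) (hb : ∀ l, b l = Real.log 2 * (∑ s ∈ Finset.Ico (j + 1) l, D s) / B)
    (E : ℝ → ℝ)
    (hE : ∀ t : ℝ, E t =
      σ2 * t / (η * h ^ 2) *
        ((∑ l ∈ Finset.Icc (j + 1) J,
            (Real.exp (a l / t) - 1) * (Real.exp (a j / t) - 1) * Real.exp (b l / t))
          + (Real.exp (a j / t) - 1)) + t * PC) :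
    ∃ T : ℝ, 0 < T ∧ deriv E T = 0 ∧
      (∀ T' : ℝ, 0 < T' → deriv E T' = 0 → T' = T) ∧
      StrictAntiOn E (Set.Ioo 0 T) ∧ StrictMonoOn E (Set.Ioi T) ∧
      (∀ t ∈ Set.Ioi (0 : ℝ), t ≠ T → E T < E t) := by
  have hlog : 0 < Real.log 2 := Real.log_pos (by norm_num)
  have haj : 0 < a j := by
    rw [ha]; exact div_pos (mul_pos hlog (hD j le_rfl hjJ)) hB
  have hal : ∀ l ∈ Finset.Icc (j + 1) J, 0 ≤ a l := by
    intro l hl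
    rw [Finset.mem_Icc] at hl
    rw [ha]
    have := hD l (le_trans (Nat.le_succ j) hl.1) hl.2
    positivity
  have hbl : ∀ l ∈ Finset.Icc (j + 1) J, 0 ≤ b l := by
    intro l hl
    rw [Finset.mem_Icc] at hl
    rw [hb]
    have hs : 0 ≤ ∑ s ∈ Finset.Ico (j + 1) l, D s :=
      Finset.sum_nonneg fun s hs => by
        rw [Finset.mem_Ico] at hs
        exact (hD s (le_trans (Nat.le_succ j) hs.1) (le_trans (Nat.le_of_lt hs.2) hl.2)).le
    positivity
  set C := σ2 / (η * h ^ 2) with hCdef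
  have hC : 0 < C := by rw [hCdef]; positivity
  -- rewrite E in terms of nomaF
  have hEeq : E = fun t => C * (t * nomaF j J a b t⁻¹) + t * PC := by
    funext t
    rw [hE]
    have hsum : ∀ l ∈ Finset.Icc (j + 1) J,
        (Real.exp (a l / t) - 1) * (Real.exp (a j / t) - 1) * Real.exp (b l / t)
          = nomaG0 (a l) (a j) (b l) t⁻¹ := by
      intro l _
      rw [nomaG0_eq]
      simp only [div_eq_mul_inv]
      ring
    rw [Finset.sum_congr rfl hsum, nomaF_eq, hCdef]
    simp only [div_eq_mul_inv]
    ring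
  -- derivative of E
  have hder : ∀ t : ℝ, t ≠ 0 → HasDerivAt E (nomaH C PC j J a b t⁻¹) t := by
    intro t ht
    have hFt : HasDerivAt (fun s : ℝ => nomaF j J a b s⁻¹)
        (nomaF1 j J a b t⁻¹ * -(t ^ 2)⁻¹) t :=
      (nomaF_hasDerivAt j J a b t⁻¹).comp t (hasDerivAt_inv ht)
    have hall := (((hasDerivAt_id t).mul hFt).const_mul C).add ((hasDerivAt_id t).mul_const PC)
    rw [hEeq]
    have h2 : t * (t ^ 2)⁻¹ = t⁻¹ := by
      field_simp
    have e : C * (1 * nomaF j J a b t⁻¹ + t * (nomaF1 j J a b t⁻¹ * -(t ^ 2)⁻¹)) + 1 * PC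
        = nomaH C PC j J a b t⁻¹ := by
      rw [nomaH_eq]
      linear_combination (-(C * nomaF1 j J a b t⁻¹)) * h2
    exact e ▸ hall
  have hderiv : ∀ t : ℝ, t ≠ 0 → deriv E t = nomaH C PC j J a b t⁻¹ :=
    fun t ht => (hder t ht).deriv
  have hHanti := nomaH_strictAnti C PC hC j J a b haj hal hbl
  set x₀ := (PC / C + 2) / a j with hx₀def
  have hx₀ : 0 < x₀ := by rw [hx₀def]; positivity
  have hHx₀ : nomaH C PC j J a b x₀ < 0 := nomaH_neg C PC hC hPC j J a b haj hal hbl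
  have contH : ContinuousOn (nomaH C PC j J a b) (Set.Icc 0 x₀) :=
    fun y _ => (nomaH_hasDerivAt C PC j J a b y).continuousAt.continuousWithinAt
  obtain ⟨xs, hxs, hHxs⟩ : ∃ xs ∈ Set.Ioo 0 x₀, nomaH C PC j J a b xs = 0 := by
    have h0mem : (0 : ℝ) ∈ Set.Ioo (nomaH C PC j J a b x₀) (nomaH C PC j J a b 0) := by
      refine ⟨hHx₀, ?_⟩
      rw [nomaH_zero]; exact hPC
    obtain ⟨xs, hxs, hval⟩ := intermediate_value_Ioo' hx₀.le contH h0mem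
    exact ⟨xs, hxs, hval⟩
  have hxs0 : 0 < xs := hxs.1
  refine ⟨xs⁻¹, inv_pos.2 hxs0, ?_, ?_, ?_, ?_, ?_⟩
  · rw [hderiv xs⁻¹ (inv_pos.2 hxs0).ne', inv_inv]
    exact hHxs
  · intro T' hT' hd
    have h1 : nomaH C PC j J a b T'⁻¹ = 0 := by rw [← hderiv T' hT'.ne']; exact hd
    have h2 : T'⁻¹ = xs :=
      hHanti.injOn (Set.mem_Ici.2 (inv_pos.2 hT').le) (Set.mem_Ici.2 hxs0.le)
        (by rw [h1, hHxs])
    rw [← inv_inv T', h2]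
  all_goals {
    have hanti : StrictAntiOn E (Set.Ioc 0 xs⁻¹) := by
      apply strictAntiOn_of_deriv_neg (convex_Ioc 0 xs⁻¹)
      · exact fun y hy => (hder y (ne_of_gt hy.1)).continuousAt.continuousWithinAt
      · intro y hy
        rw [interior_Ioc] at hy
        rw [hderiv y (ne_of_gt hy.1)]
        have hmul : y * xs < 1 := by
          calc y * xs < xs⁻¹ * xs := mul_lt_mul_of_pos_right hy.2 hxs0
            _ = 1 := inv_mul_cancel₀ hxs0.ne'
        have h1 : xs < y⁻¹ := by
          calc xs = (y * xs) * y⁻¹ := by rw [mul_comm y xs, mul_assoc, mul_inv_cancel₀ (ne_of_gt hy.1), mul_one]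
            _ < 1 * y⁻¹ := mul_lt_mul_of_pos_right hmul (inv_pos.2 hy.1)
            _ = y⁻¹ := one_mul _
        have := hHanti (Set.mem_Ici.2 hxs0.le) (Set.mem_Ici.2 (inv_pos.2 hy.1).le) h1
        rw [hHxs] at this
        linarith
    have hmono : StrictMonoOn E (Set.Ici xs⁻¹) := by
      apply strictMonoOn_of_deriv_pos (convex_Ici xs⁻¹)
      · intro y hy
        have hy0 : 0 < y := lt_of_lt_of_le (inv_pos.2 hxs0) hy
        exact (hder y hy0.ne').continuousAt.continuousWithinAt
      · intro y hy
        rw [interior_Ici] at hy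
        have hy0 : 0 < y := lt_trans (inv_pos.2 hxs0) hy
        rw [hderiv y hy0.ne']
        have hmul : 1 < y * xs := by
          calc (1:ℝ) = xs⁻¹ * xs := (inv_mul_cancel₀ hxs0.ne').symm
            _ < y * xs := mul_lt_mul_of_pos_right hy hxs0
        have h1 : y⁻¹ < xs := by
          calc y⁻¹ = 1 * y⁻¹ := (one_mul _).symm
            _ < (y * xs) * y⁻¹ := mul_lt_mul_of_pos_right hmul (inv_pos.2 hy0)
            _ = xs := by rw [mul_comm y xs, mul_assoc, mul_inv_cancel₀ (ne_of_gt hy0), mul_one]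
        have := hHanti (Set.mem_Ici.2 (inv_pos.2 hy0).le) (Set.mem_Ici.2 hxs0.le) h1
        rw [hHxs] at this
        linarith
    first
    | exact hanti.mono Set.Ioo_subset_Ioc_self
    | exact hmono.mono Set.Ioi_subset_Ici_self
    | { intro t ht hne
        rcases lt_or_gt_of_ne hne with hlt | hgt
        · exact hanti ⟨Set.mem_Ioi.1 ht, hlt.le⟩ ⟨inv_pos.2 hxs0, le_refl _⟩ hlt
        · exact hmono (Set.self_mem_Ici) (Set.mem_Ici.2 hgt.le) hgt }
  }

end NomaAux
end

section
/- The NOMA per-device energy function E is differentiable on (0, ∞) and its derivative E′(t) converges to P^C as t → +∞. -/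
open Filter

/-- NOMA per-device energy function: statement 6 of the paper. -/
theorem stmt_6 (j J : ℕ) (hjJ : j ≤ J)
    (D : ℕ → ℝ) (hD : ∀ l, j ≤ l → l ≤ J → 0 < D l)
    (B σ2 h η PC : ℝ) (hB : 0 < B) (hσ2 : 0 < σ2) (hh : 0 < h)
    (hη0 : 0 < η) (hη1 : η ≤ 1) (hPC : 0 ≤ PC)
    (a : ℕ → ℝ) (ha : ∀ l, a l = Real.log 2 * D l / B)
    (b : ℕ → ℝ) (hb : ∀ l, b l = Real.log 2 * (∑ s ∈ Finset.Ico (j + 1) l, D s) / B)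
    (E : ℝ → ℝ)
    (hE : ∀ t : ℝ, E t =
      σ2 * t / (η * h ^ 2) *
        ((∑ l ∈ Finset.Icc (j + 1) J,
            (Real.exp (a l / t) - 1) * (Real.exp (a j / t) - 1) * Real.exp (b l / t))
          + (Real.exp (a j / t) - 1)) + t * PC) :
    (∀ t ∈ Set.Ioi (0 : ℝ), DifferentiableAt ℝ E t) ∧
      Tendsto (deriv E) atTop (nhds PC) := by
  obtain ⟨g, hgdef⟩ : ∃ g : ℝ → ℝ, g = fun x =>
      σ2 / (η * h ^ 2) * ((∑ l ∈ Finset.Icc (j + 1) J,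
        (Real.exp (a l * x) - 1) * (Real.exp (a j * x) - 1) * Real.exp (b l * x))
      + (Real.exp (a j * x) - 1)) := ⟨_, rfl⟩
  have hexp : ∀ c : ℝ, ContDiff ℝ 1 (fun x : ℝ => Real.exp (c * x)) := fun c =>
    Real.contDiff_exp.comp (contDiff_const.mul contDiff_id)
  have hgC : ContDiff ℝ 1 g := by
    rw [hgdef]
    apply ContDiff.mul contDiff_const
    apply ContDiff.add
    · apply ContDiff.sum
      intro l _
      exact (((hexp (a l)).sub contDiff_const).mul ((hexp (a j)).sub contDiff_const)).mul
        (hexp (b l))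
    · exact (hexp (a j)).sub contDiff_const
  have hg0 : g 0 = 0 := by simp [hgdef]
  have hgdiff := hgC.differentiable one_ne_zero
  have hEeq : E = fun t => t * g t⁻¹ + t * PC := by
    funext t
    rw [hE, hgdef]
    simp only [div_eq_mul_inv]
    ring
  have hd : ∀ t : ℝ, t ≠ 0 →
      HasDerivAt E (g t⁻¹ + t * (deriv g t⁻¹ * -((t ^ 2)⁻¹)) + PC) t := by
    intro t ht
    rw [hEeq]
    have h1 : HasDerivAt (fun t : ℝ => t⁻¹) (-((t ^ 2)⁻¹)) t := hasDerivAt_inv ht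
    have h2 : HasDerivAt g (deriv g t⁻¹) t⁻¹ := (hgdiff t⁻¹).hasDerivAt
    have h3 := h2.comp t h1
    have h4 := (hasDerivAt_id t).mul h3
    have h5 := (hasDerivAt_id t).mul_const PC
    simpa [Function.comp_def, Pi.mul_def, Pi.add_def] using h4.add h5
  have key : Tendsto (fun t : ℝ => g t⁻¹ - deriv g t⁻¹ * t⁻¹ + PC) atTop (nhds PC) := by
    have hinv : Tendsto (fun t : ℝ => t⁻¹) atTop (nhds 0) := tendsto_inv_atTop_zero
    have t1 : Tendsto (fun t : ℝ => g t⁻¹) atTop (nhds 0) := by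
      have := ((hgC.continuous).tendsto 0).comp hinv
      rwa [hg0] at this
    have t2 : Tendsto (fun t : ℝ => deriv g t⁻¹ * t⁻¹) atTop (nhds (deriv g 0 * 0)) :=
      (((hgC.continuous_deriv le_rfl).tendsto 0).comp hinv).mul hinv
    rw [mul_zero] at t2
    have h := (t1.sub t2).add (tendsto_const_nhds (x := PC) (f := atTop))
    simpa using h
  refine ⟨fun t ht => (hd t (ne_of_gt ht)).differentiableAt, ?_⟩
  apply key.congr'
  filter_upwards [eventually_gt_atTop (0 : ℝ)] with t ht
  rw [(hd t ht.ne').deriv]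
  have h2 : (t : ℝ) ≠ 0 := ht.ne'
  field_simp
  ring
end

section
/- The derivative E′(t) of the NOMA per-device energy function tends to −∞ as t → 0 from the right. -/
open Filter Real

private lemma expc_hasDerivAt (c x : ℝ) :
    HasDerivAt (fun y : ℝ => Real.exp (c * y)) (c * Real.exp (c * x)) x := by
  simpa [mul_comm] using ((hasDerivAt_id x).const_mul c).exp

/-- NOMA per-device energy function: statement 7 of the paper. -/
theorem stmt_7 (j J : ℕ) (hjJ : j ≤ J)
    (D : ℕ → ℝ) (hD : ∀ l, j ≤ l → l ≤ J → 0 < D l)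
    (B σ2 h η PC : ℝ) (hB : 0 < B) (hσ2 : 0 < σ2) (hh : 0 < h)
    (hη0 : 0 < η) (hη1 : η ≤ 1) (hPC : 0 ≤ PC)
    (a : ℕ → ℝ) (ha : ∀ l, a l = Real.log 2 * D l / B)
    (b : ℕ → ℝ) (hb : ∀ l, b l = Real.log 2 * (∑ s ∈ Finset.Ico (j + 1) l, D s) / B)
    (E : ℝ → ℝ)
    (hE : ∀ t : ℝ, E t =
      σ2 * t / (η * h ^ 2) *
        ((∑ l ∈ Finset.Icc (j + 1) J,
            (Real.exp (a l / t) - 1) * (Real.exp (a j / t) - 1) * Real.exp (b l / t))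
          + (Real.exp (a j / t) - 1)) + t * PC) :
    Tendsto (deriv E) (nhdsWithin 0 (Set.Ioi 0)) atBot := by
  have hlog : (0:ℝ) < Real.log 2 := Real.log_pos (by norm_num)
  have haj : 0 < a j := by
    rw [ha]
    have := hD j le_rfl hjJ
    positivity
  have hal : ∀ l ∈ Finset.Icc (j+1) J, 0 < a l := by
    intro l hl
    rw [Finset.mem_Icc] at hl
    rw [ha]
    have := hD l (le_trans (Nat.le_succ j) hl.1) hl.2
    positivity
  have hbl : ∀ l ∈ Finset.Icc (j+1) J, 0 ≤ b l := by
    intro l hl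
    rw [Finset.mem_Icc] at hl
    rw [hb]
    have hsum : 0 ≤ ∑ s ∈ Finset.Ico (j+1) l, D s := by
      apply Finset.sum_nonneg
      intro s hs
      rw [Finset.mem_Ico] at hs
      exact (hD s (le_trans (Nat.le_succ j) hs.1) (le_trans (Nat.le_of_lt hs.2) hl.2)).le
    positivity
  set c : ℝ := σ2 / (η * h ^ 2) with hc
  have hcpos : 0 < c := by positivity
  set S : ℝ → ℝ := fun x =>
    (∑ l ∈ Finset.Icc (j+1) J,
      (Real.exp (a l * x) - 1) * (Real.exp (a j * x) - 1) * Real.exp (b l * x))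
      + (Real.exp (a j * x) - 1) with hSdef
  set d : ℕ → ℝ → ℝ := fun l x =>
    ((a l * Real.exp (a l * x)) * (Real.exp (a j * x) - 1)
      + (Real.exp (a l * x) - 1) * (a j * Real.exp (a j * x))) * Real.exp (b l * x)
    + ((Real.exp (a l * x) - 1) * (Real.exp (a j * x) - 1)) * (b l * Real.exp (b l * x))
    with hddef
  set S' : ℝ → ℝ := fun x =>
    (∑ l ∈ Finset.Icc (j+1) J, d l x) + a j * Real.exp (a j * x) with hS'def
  have hSderiv : ∀ x : ℝ, HasDerivAt S (S' x) x := by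
    intro x
    apply HasDerivAt.add
    · apply HasDerivAt.fun_sum
      intro l _
      exact (((expc_hasDerivAt (a l) x).sub_const 1).mul
        ((expc_hasDerivAt (a j) x).sub_const 1)).mul (expc_hasDerivAt (b l) x)
    · exact (expc_hasDerivAt (a j) x).sub_const 1
  -- rewrite E
  have hEeq : E = fun t => c * t * S t⁻¹ + t * PC := by
    funext t
    rw [hE t, hSdef, hc]
    simp only [div_eq_mul_inv]
    ring
  set G : ℝ → ℝ := fun x => c * (S x - x * S' x) + PC with hGdef
  -- derivative formula on Ioi 0
  have hev : deriv E =ᶠ[nhdsWithin 0 (Set.Ioi 0)] fun t => G t⁻¹ := by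
    filter_upwards [self_mem_nhdsWithin] with t ht
    have ht0 : (0:ℝ) < t := ht
    have htne : t ≠ 0 := ne_of_gt ht0
    have hu : HasDerivAt (fun t : ℝ => c * t) c t := by
      simpa using (hasDerivAt_id t).const_mul c
    have hv : HasDerivAt (fun t : ℝ => S t⁻¹) (S' t⁻¹ * (-(t ^ 2)⁻¹)) t :=
      (hSderiv t⁻¹).comp t (hasDerivAt_inv htne)
    have hder : HasDerivAt E
        (c * S t⁻¹ + c * t * (S' t⁻¹ * (-(t ^ 2)⁻¹)) + PC) t := by
      rw [hEeq]
      exact (hu.mul hv).add (hasDerivAt_mul_const PC)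
    rw [hder.deriv, hGdef]
    field_simp
    ring
  -- the limit of G at atTop is atBot
  have hψ : Tendsto (fun x : ℝ => (Real.exp (a j * x) - 1) - x * (a j * Real.exp (a j * x)))
      atTop atBot := by
    have t0 : Tendsto (fun x : ℝ => a j * x) atTop atTop :=
      Tendsto.const_mul_atTop haj tendsto_id
    have t1 : Tendsto (fun x : ℝ => Real.exp (a j * x)) atTop atTop :=
      Real.tendsto_exp_atTop.comp t0
    have t2 : Tendsto (fun x : ℝ => 1 + -(a j * x)) atTop atBot :=
      tendsto_atBot_add_const_left atTop 1 (tendsto_neg_atTop_atBot.comp t0)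
    have t3 : Tendsto (fun x : ℝ => Real.exp (a j * x) * (1 + -(a j * x))) atTop atBot :=
      t1.atTop_mul_atBot₀ t2
    have t4 := tendsto_atBot_add_const_right atTop (-1 : ℝ) t3
    refine t4.congr (fun x => ?_)
    ring
  have hkey : ∀ x : ℝ, S x - x * S' x =
      (∑ l ∈ Finset.Icc (j+1) J,
        ((Real.exp (a l * x) - 1) * (Real.exp (a j * x) - 1) * Real.exp (b l * x)
          - x * d l x))
      + ((Real.exp (a j * x) - 1) - x * (a j * Real.exp (a j * x))) := by
    intro x
    rw [hSdef, hS'def]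
    simp only [mul_add, Finset.mul_sum, Finset.sum_sub_distrib]
    ring
  have hterms : ∀ᶠ x : ℝ in atTop, ∀ l ∈ Finset.Icc (j+1) J,
      (Real.exp (a l * x) - 1) * (Real.exp (a j * x) - 1) * Real.exp (b l * x)
        - x * d l x ≤ 0 := by
    rw [eventually_all_finset]
    intro l hl
    have hal' := hal l hl
    have hbl' := hbl l hl
    filter_upwards [eventually_ge_atTop (a l)⁻¹, eventually_ge_atTop (0:ℝ)] with x hx hx0
    have h1 : 1 ≤ a l * x := by
      have := mul_le_mul_of_nonneg_left hx hal'.le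
      rwa [mul_inv_cancel₀ hal'.ne'] at this
    have hA1 : 1 ≤ Real.exp (a l * x) := Real.one_le_exp (by nlinarith)
    have hB1 : 1 ≤ Real.exp (a j * x) := Real.one_le_exp (by positivity)
    have hC0 : 0 < Real.exp (b l * x) := Real.exp_pos _
    simp only [hddef]
    set A := Real.exp (a l * x) with hA
    set Bj := Real.exp (a j * x) with hBj
    set C := Real.exp (b l * x) with hC
    have hAm : (0:ℝ) ≤ A - 1 := by linarith
    have hBm : (0:ℝ) ≤ Bj - 1 := by linarith
    have hCn : (0:ℝ) ≤ C := hC0.le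
    have e1 : (A - 1) * (Bj - 1) * C ≤ A * (Bj - 1) * C :=
      mul_le_mul_of_nonneg_right (mul_le_mul_of_nonneg_right (by linarith) hBm) hCn
    have e2 : A * (Bj - 1) * C ≤ (a l * x) * (A * (Bj - 1) * C) :=
      le_mul_of_one_le_left (mul_nonneg (mul_nonneg (by linarith) hBm) hCn) h1
    have e3 : 0 ≤ x * ((A - 1) * (a j * Bj) * C) :=
      mul_nonneg hx0 (mul_nonneg (mul_nonneg hAm (mul_nonneg haj.le (by linarith))) hCn)
    have e4 : 0 ≤ x * ((A - 1) * (Bj - 1) * (b l * C)) :=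
      mul_nonneg hx0 (mul_nonneg (mul_nonneg hAm hBm) (mul_nonneg hbl' hCn))
    nlinarith [e1, e2, e3, e4]
  have hSS : Tendsto (fun x => S x - x * S' x) atTop atBot := by
    apply tendsto_atBot_mono' atTop _ hψ
    filter_upwards [hterms] with x hx
    rw [hkey x]
    have : (∑ l ∈ Finset.Icc (j+1) J,
        ((Real.exp (a l * x) - 1) * (Real.exp (a j * x) - 1) * Real.exp (b l * x)
          - x * d l x)) ≤ 0 := Finset.sum_nonpos hx
    linarith
  have hG : Tendsto G atTop atBot := by
    rw [hGdef]
    exact tendsto_atBot_add_const_right atTop PC (Tendsto.const_mul_atBot hcpos hSS)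
  exact Tendsto.congr' hev.symm (hG.comp tendsto_inv_nhdsGT_zero)
end

section
/- For each j ∈ {1, …, n}, the NOMA power p_j(t) is nonnegative for all t > 0, and p_j is strictly decreasing in t on (0, ∞). -/
/-- For each `j ∈ {1, …, n}`, the closed-form NOMA power `p j t` is nonnegative for all
`t > 0` and strictly decreasing in `t` on `(0, ∞)`. -/
theorem stmt_9 (n : ℕ)
    (g : ℕ → ℝ) (hg : ∀ l, 1 ≤ l → l ≤ n → 0 < g l)
    (D : ℕ → ℝ) (hD : ∀ l, 1 ≤ l → l ≤ n → 0 < D l)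
    (B σ2 : ℝ) (hB : 0 < B) (hσ2 : 0 < σ2)
    (a : ℕ → ℝ) (ha : ∀ l, a l = Real.log 2 * D l / B)
    (b : ℕ → ℕ → ℝ)
    (hb : ∀ j l, b j l = Real.log 2 * (∑ s ∈ Finset.Ico (j + 1) l, D s) / B)
    (p : ℕ → ℝ → ℝ)
    (hp : ∀ j, ∀ t : ℝ, p j t =
      σ2 / g j *
        ((∑ l ∈ Finset.Icc (j + 1) n,
            (Real.exp (a l / t) - 1) * (Real.exp (a j / t) - 1) * Real.exp (b j l / t))
          + (Real.exp (a j / t) - 1))) :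
    ∀ j, 1 ≤ j → j ≤ n →
      (∀ t : ℝ, 0 < t → 0 ≤ p j t) ∧ StrictAntiOn (p j) (Set.Ioi (0 : ℝ)) := by
  intro j hj1 hjn
  have hlog2 : 0 < Real.log 2 := Real.log_pos (by norm_num)
  have haj : 0 < a j := by
    rw [ha]; exact div_pos (mul_pos hlog2 (hD j hj1 hjn)) hB
  have hal : ∀ l ∈ Finset.Icc (j + 1) n, 0 < a l := by
    intro l hl
    rw [Finset.mem_Icc] at hl
    rw [ha]; exact div_pos (mul_pos hlog2 (hD l (by omega) hl.2)) hB
  have hbl : ∀ l ∈ Finset.Icc (j + 1) n, 0 ≤ b j l := by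
    intro l hl
    rw [Finset.mem_Icc] at hl
    rw [hb]
    apply div_nonneg _ hB.le
    apply mul_nonneg hlog2.le
    apply Finset.sum_nonneg
    intro s hs
    rw [Finset.mem_Ico] at hs
    exact (hD s (by omega) (by omega)).le
  have hcg : 0 < σ2 / g j := div_pos hσ2 (hg j hj1 hjn)
  have hone : ∀ t : ℝ, 0 < t → ∀ x : ℝ, 0 ≤ x → 1 ≤ Real.exp (x / t) := by
    intro t ht x hx
    rw [← Real.exp_zero]
    exact Real.exp_le_exp.mpr (div_nonneg hx ht.le)
  constructor
  · intro t ht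
    rw [hp]
    apply mul_nonneg hcg.le
    have h1 : 0 ≤ Real.exp (a j / t) - 1 := by linarith [hone t ht (a j) haj.le]
    apply add_nonneg _ h1
    apply Finset.sum_nonneg
    intro l hl
    have h2 : 0 ≤ Real.exp (a l / t) - 1 := by linarith [hone t ht (a l) (hal l hl).le]
    exact mul_nonneg (mul_nonneg h2 h1) (Real.exp_pos _).le
  · intro t1 ht1 t2 ht2 h12
    simp only [Set.mem_Ioi] at ht1 ht2
    rw [hp, hp]
    apply mul_lt_mul_of_pos_left _ hcg
    apply add_lt_add_of_le_of_lt
    · apply Finset.sum_le_sum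
      intro l hl
      have hA2 : 0 ≤ Real.exp (a l / t2) - 1 := by
        linarith [hone t2 ht2 (a l) (hal l hl).le]
      have hB2 : 0 ≤ Real.exp (a j / t2) - 1 := by
        linarith [hone t2 ht2 (a j) haj.le]
      have eA : Real.exp (a l / t2) ≤ Real.exp (a l / t1) := by
        apply Real.exp_le_exp.mpr
        gcongr
        exact (hal l hl).le
      have eB : Real.exp (a j / t2) ≤ Real.exp (a j / t1) := by
        apply Real.exp_le_exp.mpr
        gcongr
      have eC : Real.exp (b j l / t2) ≤ Real.exp (b j l / t1) := by
        apply Real.exp_le_exp.mpr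
        gcongr
        exact hbl l hl
      apply mul_le_mul _ eC (Real.exp_pos _).le (mul_nonneg (by linarith) (by linarith))
      apply mul_le_mul (by linarith) (by linarith) hB2 (by linarith)
    · have : a j / t2 < a j / t1 := div_lt_div_of_pos_left haj ht1 h12
      linarith [Real.exp_lt_exp.mpr this]
end

section
/- For each j ∈ {1, …, n}, the NOMA powers p_1(t), …, p_n(t) given by the closed form satisfy the throughput equations B·t·log₂( 1 + g_j·p_j(t) / ( Σ_{l=j+1}^{n} g_l·p_l(t) + σ² ) ) = D_j, i.e., each device achieves exactly its minimal required payload. -/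
private lemma tele10 (f : ℕ → ℝ) : ∀ j n : ℕ, j ≤ n →
    ∑ l ∈ Finset.Icc (j+1) n, (f (l+1) - f l) = f (n+1) - f (j+1) := by
  intro j n h
  induction n, h using Nat.le_induction with
  | base => simp
  | succ n hn ih =>
      rw [Finset.sum_Icc_succ_top (by omega), ih]
      ring

/-- The closed-form NOMA powers satisfy the throughput equations
`B·t·log₂(1 + g_j·p_j(t)/(Σ_{l>j} g_l·p_l(t) + σ²)) = D_j` for every `j ∈ {1, …, n}`,
i.e., each device achieves exactly its minimal required payload. -/
theorem stmt_10 (n : ℕ)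
    (g : ℕ → ℝ) (hg : ∀ l, 1 ≤ l → l ≤ n → 0 < g l)
    (D : ℕ → ℝ) (hD : ∀ l, 1 ≤ l → l ≤ n → 0 < D l)
    (B σ2 t : ℝ) (hB : 0 < B) (hσ2 : 0 < σ2) (ht : 0 < t)
    (a : ℕ → ℝ) (ha : ∀ l, a l = Real.log 2 * D l / B)
    (b : ℕ → ℕ → ℝ)
    (hb : ∀ j l, b j l = Real.log 2 * (∑ s ∈ Finset.Ico (j + 1) l, D s) / B)
    (p : ℕ → ℝ)
    (hp : ∀ j, p j =
      σ2 / g j *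
        ((∑ l ∈ Finset.Icc (j + 1) n,
            (Real.exp (a l / t) - 1) * (Real.exp (a j / t) - 1) * Real.exp (b j l / t))
          + (Real.exp (a j / t) - 1))) :
    ∀ j, 1 ≤ j → j ≤ n →
      B * t * Real.logb 2
        (1 + g j * p j / ((∑ l ∈ Finset.Icc (j + 1) n, g l * p l) + σ2)) = D j := by
  have hA : ∀ j l, Real.exp (b j l / t) = ∏ s ∈ Finset.Ico (j+1) l, Real.exp (a s / t) := by
    intro j l
    have h1 : b j l / t = ∑ s ∈ Finset.Ico (j+1) l, a s / t := by
      rw [hb, Finset.mul_sum, Finset.sum_div, Finset.sum_div]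
      exact Finset.sum_congr rfl (fun s _ => by rw [ha])
    rw [h1, Real.exp_sum]
  -- key per-device formula
  have key : ∀ j, 1 ≤ j → j ≤ n → g j * p j =
      σ2 * (Real.exp (a j / t) - 1) * ∏ s ∈ Finset.Icc (j+1) n, Real.exp (a s / t) := by
    intro j h1 h2
    have hgj : g j ≠ 0 := (hg j h1 h2).ne'
    have hsum : ∑ l ∈ Finset.Icc (j+1) n,
        (Real.exp (a l / t) - 1) * (Real.exp (a j / t) - 1) * Real.exp (b j l / t)
        = (Real.exp (a j / t) - 1) * ((∏ s ∈ Finset.Icc (j+1) n, Real.exp (a s / t)) - 1) := by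
      have hcong : ∀ l ∈ Finset.Icc (j+1) n,
          (Real.exp (a l / t) - 1) * (Real.exp (a j / t) - 1) * Real.exp (b j l / t)
          = (Real.exp (a j / t) - 1) *
            ((fun m => ∏ s ∈ Finset.Ico (j+1) m, Real.exp (a s / t)) (l+1)
              - (fun m => ∏ s ∈ Finset.Ico (j+1) m, Real.exp (a s / t)) l) := by
        intro l hl
        simp only
        rw [hA, Finset.prod_Ico_succ_top (Finset.mem_Icc.mp hl).1]
        ring
      rw [Finset.sum_congr rfl hcong, ← Finset.mul_sum,
        tele10 (fun m => ∏ s ∈ Finset.Ico (j+1) m, Real.exp (a s / t)) j n h2]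
      rw [Finset.Ico_add_one_right_eq_Icc]
      simp
    rw [hp j, hsum]
    field_simp
    ring
  intro j hj1 hj2
  set P : ℝ := ∏ s ∈ Finset.Icc (j+1) n, Real.exp (a s / t) with hPdef
  have hPpos : 0 < P := Finset.prod_pos (fun s _ => Real.exp_pos _)
  -- sum of interference powers
  have hS : ∑ l ∈ Finset.Icc (j+1) n, g l * p l = σ2 * (P - 1) := by
    have hcong : ∀ l ∈ Finset.Icc (j+1) n, g l * p l
        = σ2 * (((fun m => -(∏ s ∈ Finset.Icc m n, Real.exp (a s / t))) (l+1))
            - ((fun m => -(∏ s ∈ Finset.Icc m n, Real.exp (a s / t))) l)) := by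
      intro l hl
      obtain ⟨hl1, hl2⟩ := Finset.mem_Icc.mp hl
      have hQ : (∏ s ∈ Finset.Icc l n, Real.exp (a s / t))
          = Real.exp (a l / t) * ∏ s ∈ Finset.Icc (l+1) n, Real.exp (a s / t) := by
        rw [← Finset.Ico_add_one_right_eq_Icc l n, ← Finset.Ico_add_one_right_eq_Icc (l+1) n,
          Finset.prod_eq_prod_Ico_succ_bot (by omega)]
      simp only
      rw [key l (by omega) hl2, hQ]
      ring
    rw [Finset.sum_congr rfl hcong, ← Finset.mul_sum,
      tele10 (fun m => -(∏ s ∈ Finset.Icc m n, Real.exp (a s / t))) j n hj2]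
    have : Finset.Icc (n+1) n = ∅ := by rw [Finset.Icc_eq_empty_iff]; omega
    simp only [this, Finset.prod_empty]
    rw [← hPdef]
    ring
  have hkey := key j hj1 hj2
  have hlog2 : Real.log 2 ≠ 0 := ne_of_gt (Real.log_pos (by norm_num))
  have hratio : 1 + g j * p j / ((∑ l ∈ Finset.Icc (j+1) n, g l * p l) + σ2)
      = Real.exp (a j / t) := by
    rw [hS, hkey]
    have hden : σ2 * (P - 1) + σ2 = σ2 * P := by ring
    rw [hden]
    field_simp
    rw [← hPdef]
    ring
  rw [hratio, Real.logb, Real.log_exp, ha]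
  field_simp
end

section
/- The TDMA per-device energy function E(t) = (t/(g·η))·(2^{D/(B·t)} − 1) + t·P^C is convex on (0, ∞). If P^C = 0, E is strictly decreasing on (0, ∞). If P^C > 0, there exists a unique T* > 0 at which the derivative of E vanishes, and E is strictly decreasing on (0, T*) and strictly increasing on (T*, ∞). -/
open Real Set

private lemma aux_h_anti : StrictAntiOn (fun u : ℝ => Real.exp u * (1 - u)) (Set.Ici 0) := by
  apply strictAntiOn_of_deriv_neg (convex_Ici 0)
  · fun_prop
  · intro x hx
    rw [interior_Ici] at hx
    rw [Set.mem_Ioi] at hx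
    have hd : HasDerivAt (fun u : ℝ => Real.exp u * (1 - u))
        (Real.exp x * (1 - x) + Real.exp x * (0 - 1)) x :=
      (Real.hasDerivAt_exp x).mul ((hasDerivAt_const x (1:ℝ)).sub (hasDerivAt_id x))
    rw [hd.deriv]
    have h1 := Real.exp_pos x
    nlinarith [mul_pos hx h1]

/-- Theorem 5 of the paper: the TDMA per-device energy
`E(t) = (t/(g·η))·(2^{D/(B·t)} − 1) + t·P^C` is convex on `(0, ∞)`; if `P^C = 0` it is
strictly decreasing on `(0, ∞)`; if `P^C > 0` there is a unique `T* > 0` where the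
derivative of `E` vanishes, and `E` is strictly decreasing on `(0, T*)` and strictly
increasing on `(T*, ∞)`. -/
theorem stmt_13 (g η D B PC : ℝ)
    (hg : 0 < g) (hη0 : 0 < η) (hη1 : η ≤ 1) (hD : 0 < D) (hB : 0 < B) (hPC : 0 ≤ PC)
    (E : ℝ → ℝ)
    (hE : ∀ t : ℝ, E t = t / (g * η) * ((2 : ℝ) ^ (D / (B * t)) - 1) + t * PC) :
    ConvexOn ℝ (Set.Ioi (0 : ℝ)) E ∧
    (PC = 0 → StrictAntiOn E (Set.Ioi (0 : ℝ))) ∧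
    (0 < PC → ∃ T : ℝ, 0 < T ∧ deriv E T = 0 ∧
      (∀ T' : ℝ, 0 < T' → deriv E T' = 0 → T' = T) ∧
      StrictAntiOn E (Set.Ioo 0 T) ∧ StrictMonoOn E (Set.Ioi T)) := by
  -- rewrite E in exp form with opaque constants
  have hEF' : ∀ t : ℝ, E t =
      (g * η)⁻¹ * (t * (Real.exp ((D / B * Real.log 2) / t) - 1)) + t * PC := by
    intro t
    rcases eq_or_ne t 0 with rfl | ht
    · simp [hE]
    · have harg : Real.log 2 * (D / (B * t)) = (D / B * Real.log 2) / t := by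
        rw [← div_div]; ring
      rw [hE t, Real.rpow_def_of_pos (by norm_num : (0:ℝ) < 2), harg]
      ring
  obtain ⟨c, K, hc, hK, hEF⟩ : ∃ c K : ℝ, 0 < c ∧ 0 < K ∧
      ∀ t : ℝ, E t = c * (t * (Real.exp (K / t) - 1)) + t * PC := by
    refine ⟨(g * η)⁻¹, D / B * Real.log 2, by positivity, ?_, hEF'⟩
    have := Real.log_pos one_lt_two
    positivity
  clear hEF' hE
  -- the derivative function
  set f : ℝ → ℝ := fun t => c * (Real.exp (K / t) * (1 - K / t) - 1) + PC with hfdef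
  have hd : ∀ t : ℝ, 0 < t → HasDerivAt E (f t) t := by
    intro t ht
    have hEfun : E = fun t => c * (t * (Real.exp (K / t) - 1)) + t * PC := funext hEF
    rw [hEfun]
    have h1 : HasDerivAt (fun x : ℝ => K / x) (K * -(t ^ 2)⁻¹) t := by
      simpa [div_eq_mul_inv] using (hasDerivAt_inv ht.ne').const_mul K
    have h2 := h1.exp
    have h3 : HasDerivAt (fun x : ℝ => x * (Real.exp (K / x) - 1))
        (1 * (Real.exp (K / t) - 1) + t * (Real.exp (K / t) * (K * -(t ^ 2)⁻¹))) t :=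
      (hasDerivAt_id t).mul (h2.sub_const 1)
    have h4 := (h3.const_mul c).add ((hasDerivAt_id t).mul_const PC)
    refine HasDerivAt.congr_deriv h4 ?_
    show _ = c * (Real.exp (K / t) * (1 - K / t) - 1) + PC
    field_simp
    ring
  have hderiv : ∀ t : ℝ, 0 < t → deriv E t = f t := fun t ht => (hd t ht).deriv
  have hcontE : ContinuousOn E (Set.Ioi 0) := fun t ht =>
    ((hd t ht).differentiableAt.continuousAt).continuousWithinAt
  -- f is strictly monotone on Ioi 0
  have hfmono : StrictMonoOn f (Set.Ioi 0) := by
    intro t₁ h₁ t₂ h₂ h12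
    simp only [Set.mem_Ioi] at h₁ h₂
    have hu : K / t₂ < K / t₁ := div_lt_div_of_pos_left hK h₁ h12
    have hu2 : 0 < K / t₂ := by positivity
    have hh := aux_h_anti (Set.mem_Ici.2 hu2.le) (Set.mem_Ici.2 (by positivity)) hu
    simp only at hh
    simp only [hfdef]
    nlinarith
  have hlt1 : ∀ u : ℝ, 0 < u → Real.exp u * (1 - u) < 1 := by
    intro u hu
    have := aux_h_anti (Set.self_mem_Ici) (Set.mem_Ici.2 hu.le) hu
    simpa using this
  refine ⟨?_, ?_, ?_⟩
  · -- convexity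
    refine (StrictMonoOn.strictConvexOn_of_deriv (convex_Ioi 0) hcontE ?_).convexOn
    rw [interior_Ioi]
    intro a ha b hb hab
    rw [hderiv a ha, hderiv b hb]
    exact hfmono ha hb hab
  · -- PC = 0
    intro h0
    apply strictAntiOn_of_deriv_neg (convex_Ioi 0) hcontE
    rw [interior_Ioi]
    intro x hx
    rw [Set.mem_Ioi] at hx
    rw [hderiv x hx]
    have hK' : 0 < K / x := by positivity
    have := hlt1 _ hK'
    simp only [hfdef, h0]
    nlinarith
  · -- PC > 0
    intro hPCpos
    obtain ⟨r, hr, hcr⟩ : ∃ r : ℝ, 0 < r ∧ c * r = PC :=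
      ⟨PC / c, div_pos hPCpos hc, by rw [mul_comm]; exact div_mul_cancel₀ PC hc.ne'⟩
    obtain ⟨u₀, hu₀pos, hu₀le1, hu₀ler⟩ : ∃ u : ℝ, 0 < u ∧ u ≤ 1 ∧ u ≤ r / 2 :=
      ⟨min 1 (r / 2), lt_min one_pos (by positivity), min_le_left _ _, min_le_right _ _⟩
    obtain ⟨u₁, hu₁def⟩ : ∃ u : ℝ, u = r + 2 := ⟨_, rfl⟩
    have hu₁gt1 : 1 < u₁ := by rw [hu₁def]; linarith
    have hu₁pos : 0 < u₁ := by linarith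
    have hu₀₁ : u₀ < u₁ := lt_of_le_of_lt hu₀le1 hu₁gt1
    obtain ⟨t₁, ht₁def⟩ : ∃ t : ℝ, t = K / u₁ := ⟨_, rfl⟩
    obtain ⟨t₂, ht₂def⟩ : ∃ t : ℝ, t = K / u₀ := ⟨_, rfl⟩
    have ht₁pos : 0 < t₁ := by rw [ht₁def]; positivity
    have ht₂pos : 0 < t₂ := by rw [ht₂def]; positivity
    have ht₁₂ : t₁ < t₂ := by
      rw [ht₁def, ht₂def]; exact div_lt_div_of_pos_left hK hu₀pos hu₀₁
    have hKt₁ : K / t₁ = u₁ := by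
      rw [ht₁def, div_div_eq_mul_div, mul_comm, mul_div_assoc, div_self hK.ne', mul_one]
    have hKt₂ : K / t₂ = u₀ := by
      rw [ht₂def, div_div_eq_mul_div, mul_comm, mul_div_assoc, div_self hK.ne', mul_one]
    -- sign at endpoints
    have hft₁ : f t₁ < 0 := by
      have h1 : (1:ℝ) ≤ Real.exp u₁ := Real.one_le_exp (by linarith)
      have hB2 : Real.exp u₁ * (1 - u₁) ≤ 1 - u₁ := by nlinarith
      have key : Real.exp u₁ * (1 - u₁) - 1 ≤ -r - 2 := by
        rw [hu₁def] at hB2 ⊢; linarith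
      have key2 : c * (Real.exp u₁ * (1 - u₁) - 1) ≤ -PC - 2 * c := by nlinarith
      simp only [hfdef, hKt₁]
      linarith
    have hft₂ : 0 < f t₂ := by
      have hB1 : 1 - u₀ ^ 2 ≤ Real.exp u₀ * (1 - u₀) := by
        nlinarith [Real.add_one_le_exp u₀]
      have hsq : u₀ ^ 2 ≤ u₀ := by nlinarith
      have key : -(r / 2) ≤ Real.exp u₀ * (1 - u₀) - 1 := by linarith
      have key2 : -(c * r) / 2 ≤ c * (Real.exp u₀ * (1 - u₀) - 1) := by nlinarith
      simp only [hfdef, hKt₂]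
      rw [hcr] at key2
      linarith
    -- continuity of f on Ioi 0
    have hfc : ContinuousOn f (Set.Ioi 0) := by
      have hdiv : ContinuousOn (fun t : ℝ => K / t) (Set.Ioi 0) :=
        continuousOn_const.div continuousOn_id fun x hx => ne_of_gt hx
      exact ((((Real.continuous_exp.comp_continuousOn hdiv).mul
        (continuousOn_const.sub hdiv)).sub continuousOn_const).const_smul c).add
        continuousOn_const
    have hsub : Set.Icc t₁ t₂ ⊆ Set.Ioi 0 := fun x hx => lt_of_lt_of_le ht₁pos hx.1
    have hmem : (0:ℝ) ∈ Set.Icc (f t₁) (f t₂) := ⟨hft₁.le, hft₂.le⟩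
    obtain ⟨T, hTmem, hfT⟩ := intermediate_value_Icc ht₁₂.le (hfc.mono hsub) hmem
    have hTpos : 0 < T := lt_of_lt_of_le ht₁pos hTmem.1
    refine ⟨T, hTpos, by rw [hderiv T hTpos]; exact hfT, ?_, ?_, ?_⟩
    · intro T' hT' hdT'
      have : f T' = f T := by rw [← hderiv T' hT', hdT', hfT]
      exact hfmono.injOn (Set.mem_Ioi.2 hT') (Set.mem_Ioi.2 hTpos) this
    · apply strictAntiOn_of_deriv_neg (convex_Ioo 0 T)
        (hcontE.mono fun x hx => hx.1)
      rw [interior_Ioo]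
      intro x hx
      rw [hderiv x hx.1]
      have := hfmono (Set.mem_Ioi.2 hx.1) (Set.mem_Ioi.2 hTpos) hx.2
      linarith [hfT]
    · apply strictMonoOn_of_deriv_pos (convex_Ioi T)
        (hcontE.mono fun x hx => lt_trans hTpos hx)
      rw [interior_Ioi]
      intro x hx
      rw [hderiv x (lt_trans hTpos hx)]
      have := hfmono (Set.mem_Ioi.2 hTpos) (Set.mem_Ioi.2 (lt_trans hTpos hx)) hx
      linarith [hfT]
end

section
/- Let E_i(t) = Σ_{j=1}^{m} E_j(t) be the total energy consumed by the m devices of one cluster, where each E_j is the NOMA per-device energy function with common transmission time t and circuit power P^C > 0. Then E_i is convex on (0, ∞), there exists a unique T_i* > 0 at which the derivative of E_i vanishes, and E_i is strictly decreasing on (0, T_i*) and strictly increasing on (T_i*, ∞). -/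
open Real Set Filter

namespace Stmt17

noncomputable def phi (c t : ℝ) : ℝ := t * Real.exp (c / t)
noncomputable def psi (c t : ℝ) : ℝ := Real.exp (c / t) * (1 - c / t)
noncomputable def rr (c t : ℝ) : ℝ := (c / t) ^ 2 * Real.exp (c / t) / t

lemma hasDerivAt_div (c : ℝ) {t : ℝ} (ht : t ≠ 0) :
    HasDerivAt (fun t => c / t) (-(c / t ^ 2)) t := by
  have := (hasDerivAt_inv ht).const_mul c
  simpa [div_eq_mul_inv, neg_div, mul_div_assoc] using this

lemma hasDerivAt_phi (c : ℝ) {t : ℝ} (ht : t ≠ 0) :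
    HasDerivAt (fun t => phi c t) (psi c t) t := by
  have hexp := (Real.hasDerivAt_exp (c / t)).comp t (hasDerivAt_div c ht)
  have h := (hasDerivAt_id t).mul hexp
  unfold phi psi
  refine h.congr_deriv ?_
  simp only [Function.comp_apply, id_eq]
  field_simp
  ring

lemma hasDerivAt_psi (c : ℝ) {t : ℝ} (ht : t ≠ 0) :
    HasDerivAt (fun t => psi c t) (rr c t) t := by
  have hd := hasDerivAt_div c ht
  have hexp := (Real.hasDerivAt_exp (c / t)).comp t hd
  have h := hexp.mul ((hasDerivAt_const t (1 : ℝ)).sub hd)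
  unfold psi rr
  refine h.congr_deriv ?_
  simp only [Function.comp_apply, Pi.sub_apply]
  field_simp
  ring

lemma expand (x y z t : ℝ) :
    t * ((Real.exp (x / t) - 1) * (Real.exp (y / t) - 1) * Real.exp (z / t))
      = phi (x + y + z) t - phi (x + z) t - phi (y + z) t + phi z t := by
  simp only [phi, add_div, Real.exp_add]
  ring

lemma rho'_strictMono : StrictMonoOn (fun u : ℝ => (2 * u + u ^ 2) * Real.exp u) (Set.Ici 0) := by
  intro s hs s' _ h
  simp only [mem_Ici] at hs
  have h1 : 2 * s + s ^ 2 < 2 * s' + s' ^ 2 := by nlinarith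
  have h2 : Real.exp s ≤ Real.exp s' := Real.exp_le_exp.mpr h.le
  have h0 : 0 ≤ 2 * s + s ^ 2 := by nlinarith
  have e1 := Real.exp_pos s
  have e2 := Real.exp_pos s'
  show (2 * s + s ^ 2) * Real.exp s < (2 * s' + s' ^ 2) * Real.exp s'
  calc (2 * s + s ^ 2) * Real.exp s ≤ (2 * s + s ^ 2) * Real.exp s' := by nlinarith
    _ < (2 * s' + s' ^ 2) * Real.exp s' := by nlinarith

lemma hasDerivAt_rho (u : ℝ) :
    HasDerivAt (fun u : ℝ => u ^ 2 * Real.exp u) ((2 * u + u ^ 2) * Real.exp u) u := by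
  have := (hasDerivAt_pow 2 u).mul (Real.hasDerivAt_exp u)
  refine this.congr_deriv ?_
  norm_num
  ring

lemma key {u v w : ℝ} (hu : 0 < u) (hv : 0 < v) (hw : 0 ≤ w) :
    (u + w) ^ 2 * Real.exp (u + w) + (v + w) ^ 2 * Real.exp (v + w)
      < (u + v + w) ^ 2 * Real.exp (u + v + w) + w ^ 2 * Real.exp w := by
  have hmono : StrictMonoOn (fun s => (s + u) ^ 2 * Real.exp (s + u) - s ^ 2 * Real.exp s)
      (Set.Ici 0) := by
    apply strictMonoOn_of_deriv_pos (convex_Ici 0)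
    · fun_prop
    · intro s hs
      rw [interior_Ici, mem_Ioi] at hs
      have hd : HasDerivAt (fun s => (s + u) ^ 2 * Real.exp (s + u) - s ^ 2 * Real.exp s)
          ((2 * (s + u) + (s + u) ^ 2) * Real.exp (s + u) - (2 * s + s ^ 2) * Real.exp s) s := by
        have h1 : HasDerivAt (fun s : ℝ => s + u) 1 s := (hasDerivAt_id s).add_const u
        have h2 := (hasDerivAt_rho (s + u)).comp s h1
        have h3 := h2.sub (hasDerivAt_rho s)
        rw [mul_one] at h3
        exact h3
      rw [hd.deriv]
      have := rho'_strictMono (mem_Ici.mpr hs.le)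
        (mem_Ici.mpr (by linarith : (0:ℝ) ≤ s + u)) (by linarith : s < s + u)
      simpa [sub_pos] using this
  have h := hmono (mem_Ici.mpr hw) (mem_Ici.mpr (by linarith : (0:ℝ) ≤ v + w))
    (by linarith : w < v + w)
  simp only at h
  rw [show w + u = u + w by ring, show v + w + u = u + v + w by ring] at h
  linarith

lemma rr_group_pos {x y z t : ℝ} (hx : 0 < x) (hy : 0 < y) (hz : 0 ≤ z) (ht : 0 < t) :
    0 < rr (x + y + z) t - rr (x + z) t - rr (y + z) t + rr z t := by
  have h := key (u := x / t) (v := y / t) (w := z / t)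
    (div_pos hx ht) (div_pos hy ht) (div_nonneg hz ht.le)
  have e1 : (x + z) / t = x / t + z / t := add_div _ _ _
  have e2 : (y + z) / t = y / t + z / t := add_div _ _ _
  have e3 : (x + y + z) / t = x / t + y / t + z / t := by rw [add_div, add_div]
  have e : rr (x + y + z) t - rr (x + z) t - rr (y + z) t + rr z t
      = ((x / t + y / t + z / t) ^ 2 * Real.exp (x / t + y / t + z / t)
          + (z / t) ^ 2 * Real.exp (z / t)
          - (x / t + z / t) ^ 2 * Real.exp (x / t + z / t)
          - (y / t + z / t) ^ 2 * Real.exp (y / t + z / t)) / t := by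
    unfold rr
    rw [e1, e2, e3]
    ring
  rw [e]
  exact div_pos (by linarith) ht

lemma rr_pos {c t : ℝ} (hc : 0 < c) (ht : 0 < t) : 0 < rr c t := by
  unfold rr
  have h := div_pos hc ht
  positivity

lemma quarter_sq_le_exp {x : ℝ} (hx : 0 ≤ x) : x ^ 2 / 4 ≤ Real.exp x := by
  have h := Real.add_one_le_exp (x / 2)
  have hx2 : Real.exp x = Real.exp (x / 2) * Real.exp (x / 2) := by
    rw [← Real.exp_add]; ring_nf
  nlinarith [Real.exp_pos (x / 2)]

lemma psi_tendsto (c : ℝ) : Tendsto (fun t => psi c t) atTop (nhds 1) := by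
  have h0 : Tendsto (fun t : ℝ => c / t) atTop (nhds 0) :=
    tendsto_const_nhds.div_atTop tendsto_id
  have := ((Real.continuous_exp.tendsto 0).comp h0).mul
    ((tendsto_const_nhds (x := (1:ℝ))).sub h0)
  simpa [psi, Function.comp] using this

noncomputable def Fd (m : ℕ) (A : ℕ → ℝ) (Z : ℕ → ℕ → ℝ) (c : ℕ → ℝ) (PC : ℝ) (t : ℝ) : ℝ :=
  ∑ j ∈ Finset.Icc 1 m,
    (c j * ((∑ l ∈ Finset.Icc (j + 1) m,
        (phi (A l + A j + Z j l) t - phi (A l + Z j l) t - phi (A j + Z j l) t + phi (Z j l) t))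
      + phi (A j) t - t) + t * PC)

noncomputable def Fd' (m : ℕ) (A : ℕ → ℝ) (Z : ℕ → ℕ → ℝ) (c : ℕ → ℝ) (PC : ℝ) (t : ℝ) : ℝ :=
  ∑ j ∈ Finset.Icc 1 m,
    (c j * ((∑ l ∈ Finset.Icc (j + 1) m,
        (psi (A l + A j + Z j l) t - psi (A l + Z j l) t - psi (A j + Z j l) t + psi (Z j l) t))
      + psi (A j) t - 1) + PC)

noncomputable def Fd'' (m : ℕ) (A : ℕ → ℝ) (Z : ℕ → ℕ → ℝ) (c : ℕ → ℝ) (t : ℝ) : ℝ :=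
  ∑ j ∈ Finset.Icc 1 m,
    c j * ((∑ l ∈ Finset.Icc (j + 1) m,
        (rr (A l + A j + Z j l) t - rr (A l + Z j l) t - rr (A j + Z j l) t + rr (Z j l) t))
      + rr (A j) t)

lemma hasDerivAt_Fd (m : ℕ) (A : ℕ → ℝ) (Z : ℕ → ℕ → ℝ) (c : ℕ → ℝ) (PC : ℝ) {t : ℝ}
    (ht : t ≠ 0) : HasDerivAt (Fd m A Z c PC) (Fd' m A Z c PC t) t := by
  unfold Fd Fd'
  apply HasDerivAt.fun_sum
  intro j _
  have hsum : HasDerivAt (fun t => ∑ l ∈ Finset.Icc (j + 1) m,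
      (phi (A l + A j + Z j l) t - phi (A l + Z j l) t - phi (A j + Z j l) t + phi (Z j l) t))
      (∑ l ∈ Finset.Icc (j + 1) m,
      (psi (A l + A j + Z j l) t - psi (A l + Z j l) t - psi (A j + Z j l) t + psi (Z j l) t)) t :=
    HasDerivAt.fun_sum fun l _ =>
      (((hasDerivAt_phi _ ht).sub (hasDerivAt_phi _ ht)).sub (hasDerivAt_phi _ ht)).add
        (hasDerivAt_phi _ ht)
  have h1 := (((hsum.add (hasDerivAt_phi (A j) ht)).sub (hasDerivAt_id t)).const_mul (c j)).add
    ((hasDerivAt_id t).mul_const PC)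
  simp at h1
  exact h1

lemma hasDerivAt_Fd' (m : ℕ) (A : ℕ → ℝ) (Z : ℕ → ℕ → ℝ) (c : ℕ → ℝ) (PC : ℝ) {t : ℝ}
    (ht : t ≠ 0) : HasDerivAt (Fd' m A Z c PC) (Fd'' m A Z c t) t := by
  unfold Fd' Fd''
  apply HasDerivAt.fun_sum
  intro j _
  have hsum : HasDerivAt (fun t => ∑ l ∈ Finset.Icc (j + 1) m,
      (psi (A l + A j + Z j l) t - psi (A l + Z j l) t - psi (A j + Z j l) t + psi (Z j l) t))
      (∑ l ∈ Finset.Icc (j + 1) m,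
      (rr (A l + A j + Z j l) t - rr (A l + Z j l) t - rr (A j + Z j l) t + rr (Z j l) t)) t :=
    HasDerivAt.fun_sum fun l _ =>
      (((hasDerivAt_psi _ ht).sub (hasDerivAt_psi _ ht)).sub (hasDerivAt_psi _ ht)).add
        (hasDerivAt_psi _ ht)
  have h1 := (((hsum.add (hasDerivAt_psi (A j) ht)).sub (hasDerivAt_const t 1)).const_mul
    (c j)).add (hasDerivAt_const t PC)
  simp at h1
  exact h1

lemma Fd''_pos (m : ℕ) (hm : 1 ≤ m) (A : ℕ → ℝ) (Z : ℕ → ℕ → ℝ) (c : ℕ → ℝ)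
    (hA : ∀ j ∈ Finset.Icc 1 m, 0 < A j)
    (hZ : ∀ j ∈ Finset.Icc 1 m, ∀ l ∈ Finset.Icc (j + 1) m, 0 ≤ Z j l)
    (hc : ∀ j ∈ Finset.Icc 1 m, 0 < c j) {t : ℝ} (ht : 0 < t) :
    0 < Fd'' m A Z c t := by
  apply Finset.sum_pos _ ⟨1, Finset.mem_Icc.mpr ⟨le_refl 1, hm⟩⟩
  intro j hj
  apply mul_pos (hc j hj)
  apply add_pos_of_nonneg_of_pos
  · apply Finset.sum_nonneg
    intro l hl
    have hlm : l ∈ Finset.Icc 1 m := by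
      rw [Finset.mem_Icc] at hl ⊢
      omega
    exact (rr_group_pos (hA l hlm) (hA j hj) (hZ j hj l hl) ht).le
  · exact rr_pos (hA j hj) ht

lemma Fd_lb (m : ℕ) (hm : 1 ≤ m) (A : ℕ → ℝ) (Z : ℕ → ℕ → ℝ) (c : ℕ → ℝ) (PC : ℝ)
    (hA : ∀ j ∈ Finset.Icc 1 m, 0 < A j)
    (hZ : ∀ j ∈ Finset.Icc 1 m, ∀ l ∈ Finset.Icc (j + 1) m, 0 ≤ Z j l)
    (hc : ∀ j ∈ Finset.Icc 1 m, 0 < c j) (hPC : 0 < PC) {s : ℝ} (hs : 0 < s) :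
    c 1 * (A 1 ^ 2 / (4 * s)) - c 1 * s ≤ Fd m A Z c PC s := by
  have h1mem : 1 ∈ Finset.Icc 1 m := Finset.mem_Icc.mpr ⟨le_refl 1, hm⟩
  have hterm : ∀ j ∈ Finset.Icc 1 m, 0 ≤ c j * ((∑ l ∈ Finset.Icc (j + 1) m,
      (phi (A l + A j + Z j l) s - phi (A l + Z j l) s - phi (A j + Z j l) s + phi (Z j l) s))
      + phi (A j) s - s) + s * PC := by
    intro j hj
    have hsum : 0 ≤ ∑ l ∈ Finset.Icc (j + 1) m,
        (phi (A l + A j + Z j l) s - phi (A l + Z j l) s - phi (A j + Z j l) s + phi (Z j l) s) := by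
      apply Finset.sum_nonneg
      intro l hl
      have hlm : l ∈ Finset.Icc 1 m := by rw [Finset.mem_Icc] at hl ⊢; omega
      rw [← expand]
      apply mul_nonneg hs.le
      apply mul_nonneg (mul_nonneg _ _) (Real.exp_pos _).le
      · exact sub_nonneg.mpr (Real.one_le_exp (div_nonneg (hA l hlm).le hs.le))
      · exact sub_nonneg.mpr (Real.one_le_exp (div_nonneg (hA j hj).le hs.le))
    have hphi : s ≤ phi (A j) s := by
      unfold phi
      nlinarith [Real.one_le_exp (div_nonneg (hA j hj).le hs.le)]
    have := (hc j hj).le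
    nlinarith [hPC, hs]
  have hsingle := Finset.single_le_sum hterm h1mem
  have hphi1 : A 1 ^ 2 / (4 * s) ≤ phi (A 1) s := by
    have hq := quarter_sq_le_exp (div_nonneg (hA 1 h1mem).le hs.le)
    have he : A 1 ^ 2 / (4 * s) = s * ((A 1 / s) ^ 2 / 4) := by
      field_simp
    rw [he]
    unfold phi
    exact mul_le_mul_of_nonneg_left hq hs.le
  have hsum1 : 0 ≤ ∑ l ∈ Finset.Icc (1 + 1) m,
      (phi (A l + A 1 + Z 1 l) s - phi (A l + Z 1 l) s - phi (A 1 + Z 1 l) s + phi (Z 1 l) s) := by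
    apply Finset.sum_nonneg
    intro l hl
    have hlm : l ∈ Finset.Icc 1 m := by rw [Finset.mem_Icc] at hl ⊢; omega
    rw [← expand]
    apply mul_nonneg hs.le
    apply mul_nonneg (mul_nonneg _ _) (Real.exp_pos _).le
    · exact sub_nonneg.mpr (Real.one_le_exp (div_nonneg (hA l hlm).le hs.le))
    · exact sub_nonneg.mpr (Real.one_le_exp (div_nonneg (hA 1 h1mem).le hs.le))
  have hc1 := (hc 1 h1mem).le
  unfold Fd
  nlinarith [hsingle, hphi1, hsum1, hPC, hs]


theorem main (m : ℕ) (hm : 1 ≤ m) (A : ℕ → ℝ) (Z : ℕ → ℕ → ℝ) (c : ℕ → ℝ) (PC : ℝ)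
    (hA : ∀ j ∈ Finset.Icc 1 m, 0 < A j)
    (hZ : ∀ j ∈ Finset.Icc 1 m, ∀ l ∈ Finset.Icc (j + 1) m, 0 ≤ Z j l)
    (hc : ∀ j ∈ Finset.Icc 1 m, 0 < c j) (hPC : 0 < PC) :
    ConvexOn ℝ (Set.Ioi (0 : ℝ)) (Fd m A Z c PC) ∧
    ∃ T : ℝ, 0 < T ∧ deriv (Fd m A Z c PC) T = 0 ∧
      (∀ T' : ℝ, 0 < T' → deriv (Fd m A Z c PC) T' = 0 → T' = T) ∧
      StrictAntiOn (Fd m A Z c PC) (Set.Ioo 0 T) ∧ StrictMonoOn (Fd m A Z c PC) (Set.Ioi T) := by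
  have h1mem : 1 ∈ Finset.Icc 1 m := Finset.mem_Icc.mpr ⟨le_refl 1, hm⟩
  set F : ℝ → ℝ := Fd m A Z c PC with hFdef
  set F' : ℝ → ℝ := Fd' m A Z c PC with hF'def
  have hder : ∀ t : ℝ, t ≠ 0 → HasDerivAt F (F' t) t := fun t ht => hasDerivAt_Fd m A Z c PC ht
  have hder' : ∀ t : ℝ, t ≠ 0 → HasDerivAt F' (Fd'' m A Z c t) t :=
    fun t ht => hasDerivAt_Fd' m A Z c PC ht
  have hderiv_eq : ∀ t : ℝ, 0 < t → deriv F t = F' t := fun t ht => (hder t ht.ne').deriv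
  have hcontF : ContinuousOn F (Ioi 0) := fun t ht =>
    (hder t (ne_of_gt ht)).differentiableAt.continuousAt.continuousWithinAt
  have hcontF' : ContinuousOn F' (Ioi 0) := fun t ht =>
    (hder' t (ne_of_gt ht)).differentiableAt.continuousAt.continuousWithinAt
  have hmono : StrictMonoOn F' (Ioi 0) := by
    apply strictMonoOn_of_deriv_pos (convex_Ioi 0) hcontF'
    intro t ht
    rw [interior_Ioi, mem_Ioi] at ht
    rw [(hder' t ht.ne').deriv]
    exact Fd''_pos m hm A Z c hA hZ hc ht
  have hconv : StrictConvexOn ℝ (Ioi 0) F := by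
    apply StrictMonoOn.strictConvexOn_of_deriv (convex_Ioi 0) hcontF
    rw [interior_Ioi]
    intro x hx y hy hxy
    rw [hderiv_eq x hx, hderiv_eq y hy]
    exact hmono hx hy hxy
  -- a point with negative derivative
  have hc1 : 0 < c 1 := hc 1 h1mem
  have hA1 : 0 < A 1 := hA 1 h1mem
  set M : ℝ := max (F 1) 0 with hMdef
  have hM0 : 0 ≤ M := le_max_right _ _
  have hden : 0 < M + 1 + c 1 := by linarith
  set K : ℝ := c 1 * A 1 ^ 2 / 4 with hKdef
  have hKpos : 0 < K := by positivity
  set s0 : ℝ := min (1 / 2 : ℝ) (K / (M + 1 + c 1)) with hs0def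
  have hs0pos : 0 < s0 := lt_min (by norm_num) (div_pos hKpos hden)
  have hs0lt1 : s0 < 1 := lt_of_le_of_lt (min_le_left _ _) (by norm_num)
  have hFs0 : F 1 < F s0 := by
    have hlb := Fd_lb m hm A Z c PC hA hZ hc hPC hs0pos
    rw [← hFdef] at hlb
    have hrw : c 1 * (A 1 ^ 2 / (4 * s0)) = K / s0 := by
      rw [hKdef]
      field_simp
    have h1 : M + 1 + c 1 ≤ K / s0 := by
      rw [le_div_iff₀ hs0pos]
      have hle : s0 ≤ K / (M + 1 + c 1) := min_le_right _ _
      calc (M + 1 + c 1) * s0 ≤ (M + 1 + c 1) * (K / (M + 1 + c 1)) :=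
            mul_le_mul_of_nonneg_left hle hden.le
        _ = K := by field_simp
    have h2 : c 1 * s0 ≤ c 1 := by nlinarith
    have hM : F 1 ≤ M := le_max_left _ _
    rw [hrw] at hlb
    linarith
  obtain ⟨s1, hs1Ioo, hs1eq⟩ := exists_hasDerivAt_eq_slope F F' hs0lt1
    (hcontF.mono fun x hx => lt_of_lt_of_le hs0pos hx.1)
    (fun x hx => hder x (ne_of_gt (lt_trans hs0pos hx.1)))
  have hs1pos : 0 < s1 := lt_trans hs0pos hs1Ioo.1
  have hs1neg : F' s1 < 0 := by
    rw [hs1eq]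
    apply div_neg_of_neg_of_pos <;> linarith
  -- a point with positive derivative
  have hlim : Tendsto F' atTop (nhds (∑ j ∈ Finset.Icc 1 m,
      (c j * ((∑ l ∈ Finset.Icc (j + 1) m, ((1 : ℝ) - 1 - 1 + 1)) + 1 - 1) + PC))) := by
    rw [hF'def]
    unfold Fd'
    apply tendsto_finset_sum
    intro j _
    apply Tendsto.add _ tendsto_const_nhds
    apply Tendsto.const_mul
    apply Tendsto.sub _ tendsto_const_nhds
    apply Tendsto.add
    · apply tendsto_finset_sum
      intro l _
      exact (((psi_tendsto _).sub (psi_tendsto _)).sub (psi_tendsto _)).add (psi_tendsto _)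
    · exact psi_tendsto _
  have hLpos : (0 : ℝ) < ∑ j ∈ Finset.Icc 1 m,
      (c j * ((∑ l ∈ Finset.Icc (j + 1) m, ((1 : ℝ) - 1 - 1 + 1)) + 1 - 1) + PC) := by
    apply Finset.sum_pos _ ⟨1, h1mem⟩
    intro j _
    have : ((1 : ℝ) - 1 - 1 + 1) = 0 := by norm_num
    rw [this]
    simpa using hPC
  obtain ⟨t2, ht2pos', ht2gt⟩ := ((hlim.eventually (eventually_gt_nhds hLpos)).and
    (eventually_gt_atTop s1)).exists
  -- a zero of F' by IVT
  have hsub : Icc s1 t2 ⊆ Ioi 0 := fun x hx => lt_of_lt_of_le hs1pos hx.1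
  obtain ⟨T, hTmem, hTval⟩ := intermediate_value_Icc ht2gt.le (hcontF'.mono hsub)
    ⟨hs1neg.le, ht2pos'.le⟩
  have hTpos : 0 < T := lt_of_lt_of_le hs1pos hTmem.1
  refine ⟨hconv.convexOn, T, hTpos, ?_, ?_, ?_, ?_⟩
  · rw [hderiv_eq T hTpos]; exact hTval
  · intro T' hT' hdT'
    have h1 : F' T' = F' T := by rw [← hderiv_eq T' hT', hdT', hTval]
    exact hmono.injOn (mem_Ioi.mpr hT') (mem_Ioi.mpr hTpos) h1
  · apply strictAntiOn_of_deriv_neg (convex_Ioo 0 T) (hcontF.mono fun x hx => hx.1)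
    intro x hx
    rw [interior_Ioo] at hx
    rw [hderiv_eq x hx.1]
    have h := hmono (mem_Ioi.mpr hx.1) (mem_Ioi.mpr hTpos) hx.2
    rwa [hTval] at h
  · apply strictMonoOn_of_deriv_pos (convex_Ioi T)
      (hcontF.mono fun x hx => lt_trans hTpos hx)
    intro x hx
    rw [interior_Ioi, mem_Ioi] at hx
    rw [hderiv_eq x (lt_trans hTpos hx)]
    have h := hmono (mem_Ioi.mpr hTpos) (mem_Ioi.mpr (lt_trans hTpos hx)) hx
    rwa [hTval] at h

end Stmt17

open Stmt17

/-- Lemma 5 of the paper: the total cluster energy `E_i(t) = Σ_{j=1}^{m} E_j(t)`, where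
each `E_j` is the NOMA per-device energy with common transmission time `t` and circuit
power `P^C > 0`, is convex on `(0, ∞)`, has a unique critical point `T_i* > 0`, and is
strictly decreasing on `(0, T_i*)` and strictly increasing on `(T_i*, ∞)`. -/
theorem stmt_17 (m : ℕ) (hm : 1 ≤ m)
    (g : ℕ → ℝ) (hg : ∀ l, 1 ≤ l → l ≤ m → 0 < g l)
    (D : ℕ → ℝ) (hD : ∀ l, 1 ≤ l → l ≤ m → 0 < D l)
    (B σ2 η PC : ℝ) (hB : 0 < B) (hσ2 : 0 < σ2)
    (hη0 : 0 < η) (hη1 : η ≤ 1) (hPC : 0 < PC)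
    (a : ℕ → ℝ) (ha : ∀ l, a l = Real.log 2 * D l / B)
    (b : ℕ → ℕ → ℝ)
    (hb : ∀ j l, b j l = Real.log 2 * (∑ s ∈ Finset.Ico (j + 1) l, D s) / B)
    (E : ℕ → ℝ → ℝ)
    (hEj : ∀ j, ∀ t : ℝ, E j t =
      σ2 * t / (η * g j) *
        ((∑ l ∈ Finset.Icc (j + 1) m,
            (Real.exp (a l / t) - 1) * (Real.exp (a j / t) - 1) * Real.exp (b j l / t))
          + (Real.exp (a j / t) - 1)) + t * PC)
    (Ei : ℝ → ℝ) (hEi : ∀ t : ℝ, Ei t = ∑ j ∈ Finset.Icc 1 m, E j t) :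
    ConvexOn ℝ (Set.Ioi (0 : ℝ)) Ei ∧
    ∃ T : ℝ, 0 < T ∧ deriv Ei T = 0 ∧
      (∀ T' : ℝ, 0 < T' → deriv Ei T' = 0 → T' = T) ∧
      StrictAntiOn Ei (Set.Ioo 0 T) ∧ StrictMonoOn Ei (Set.Ioi T) := by
  have hEF : Ei = Fd m a b (fun j => σ2 / (η * g j)) PC := by
    funext t
    rw [hEi]
    unfold Fd
    apply Finset.sum_congr rfl
    intro j _
    rw [hEj]
    have h1 : t * (∑ l ∈ Finset.Icc (j + 1) m,
        (Real.exp (a l / t) - 1) * (Real.exp (a j / t) - 1) * Real.exp (b j l / t))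
        = ∑ l ∈ Finset.Icc (j + 1) m,
        (phi (a l + a j + b j l) t - phi (a l + b j l) t - phi (a j + b j l) t
          + phi (b j l) t) := by
      rw [Finset.mul_sum]
      exact Finset.sum_congr rfl fun l _ => expand _ _ _ t
    have h2 : t * (Real.exp (a j / t) - 1) = phi (a j) t - t := by
      unfold phi; ring
    calc σ2 * t / (η * g j) *
        ((∑ l ∈ Finset.Icc (j + 1) m,
            (Real.exp (a l / t) - 1) * (Real.exp (a j / t) - 1) * Real.exp (b j l / t))
          + (Real.exp (a j / t) - 1)) + t * PC
        = σ2 / (η * g j) *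
          ((t * ∑ l ∈ Finset.Icc (j + 1) m,
            (Real.exp (a l / t) - 1) * (Real.exp (a j / t) - 1) * Real.exp (b j l / t))
          + t * (Real.exp (a j / t) - 1)) + t * PC := by ring
      _ = _ := by rw [h1, h2]; ring
  rw [hEF]
  apply main m hm a b _ _ _ _ _ hPC
  · intro j hj
    rw [Finset.mem_Icc] at hj
    rw [ha]
    exact div_pos (mul_pos (Real.log_pos (by norm_num)) (hD j hj.1 hj.2)) hB
  · intro j hj l hl
    rw [Finset.mem_Icc] at hj hl
    rw [hb]
    apply div_nonneg _ hB.le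
    apply mul_nonneg (Real.log_nonneg (by norm_num))
    apply Finset.sum_nonneg
    intro s hs
    rw [Finset.mem_Ico] at hs
    exact (hD s (by omega) (by omega)).le
  · intro j hj
    rw [Finset.mem_Icc] at hj
    exact div_pos hσ2 (mul_pos hη0 (hg j hj.1 hj.2))
end

section
/- For all constants a ≥ 0, b ≥ 0, c ≥ 0, the function t ↦ (e^{a/t} − 1)·(e^{b/t} − 1)·e^{c/t} is convex on (0, ∞). -/
open Set Real

/-- `s ↦ exp (a*s)` is convex on ℝ. -/
lemma aux_convex_exp_mul (a : ℝ) : ConvexOn ℝ (Set.Ici (0:ℝ)) (fun s : ℝ => Real.exp (a * s)) := by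
  have : ConvexOn ℝ Set.univ (fun s : ℝ => Real.exp (a * s)) := by
    have h := convexOn_exp
    refine ⟨convex_univ, fun x _ y _ p q hp hq hpq => ?_⟩
    have := h.2 (Set.mem_univ (a*x)) (Set.mem_univ (a*y)) hp hq hpq
    simpa [mul_add, mul_comm, mul_left_comm, smul_eq_mul, mul_assoc] using this
  exact this.subset (Set.subset_univ _) (convex_Ici 0)

lemma aux_mono_exp_mul {a : ℝ} (ha : 0 ≤ a) :
    MonotoneOn (fun s : ℝ => Real.exp (a * s)) (Set.Ici (0:ℝ)) := by
  intro x _ y _ hxy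
  exact Real.exp_le_exp.2 (mul_le_mul_of_nonneg_left hxy ha)

lemma aux_nonneg_exp_sub {a : ℝ} (ha : 0 ≤ a) :
    ∀ ⦃x : ℝ⦄, x ∈ Set.Ici (0:ℝ) → 0 ≤ Real.exp (a * x) - 1 := by
  intro x hx
  have : (1:ℝ) ≤ Real.exp (a * x) := by
    rw [← Real.exp_zero]
    exact Real.exp_le_exp.2 (mul_nonneg ha hx)
  linarith

/-- Monotone functions monovary. -/
lemma aux_monovary {f g : ℝ → ℝ} {s : Set ℝ} (hf : MonotoneOn f s) (hg : MonotoneOn g s) :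
    MonovaryOn f g s := by
  intro i hi j hj hgij
  rcases le_total i j with h | h
  · exact hf hi hj h
  · exact absurd (hg hj hi h) (not_le.2 hgij)

/-- The core function `g(s) = (e^{as}-1)(e^{bs}-1)e^{cs}` is convex on `[0,∞)`. -/
lemma aux_g_convex {a b c : ℝ} (ha : 0 ≤ a) (hb : 0 ≤ b) (hc : 0 ≤ c) :
    ConvexOn ℝ (Set.Ici (0:ℝ))
      (fun s : ℝ => (Real.exp (a * s) - 1) * (Real.exp (b * s) - 1) * Real.exp (c * s)) := by
  have hA : ConvexOn ℝ (Set.Ici (0:ℝ)) (fun s : ℝ => Real.exp (a * s) - 1) := by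
    exact (aux_convex_exp_mul a).sub (concaveOn_const 1 (convex_Ici 0))
  have hB : ConvexOn ℝ (Set.Ici (0:ℝ)) (fun s : ℝ => Real.exp (b * s) - 1) := by
    exact (aux_convex_exp_mul b).sub (concaveOn_const 1 (convex_Ici 0))
  have hC : ConvexOn ℝ (Set.Ici (0:ℝ)) (fun s : ℝ => Real.exp (c * s)) := aux_convex_exp_mul c
  have hmA : MonotoneOn (fun s : ℝ => Real.exp (a * s) - 1) (Set.Ici (0:ℝ)) := by
    intro x hx y hy hxy; have := aux_mono_exp_mul ha hx hy hxy; simpa using this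
  have hmB : MonotoneOn (fun s : ℝ => Real.exp (b * s) - 1) (Set.Ici (0:ℝ)) := by
    intro x hx y hy hxy; have := aux_mono_exp_mul hb hx hy hxy; simpa using this
  have hAB : ConvexOn ℝ (Set.Ici (0:ℝ))
      ((fun s : ℝ => Real.exp (a * s) - 1) * (fun s : ℝ => Real.exp (b * s) - 1)) :=
    hA.mul hB (aux_nonneg_exp_sub ha) (aux_nonneg_exp_sub hb) (aux_monovary hmA hmB)
  have hmAB : MonotoneOn
      ((fun s : ℝ => Real.exp (a * s) - 1) * (fun s : ℝ => Real.exp (b * s) - 1))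
      (Set.Ici (0:ℝ)) := by
    intro x hx y hy hxy
    exact mul_le_mul (hmA hx hy hxy) (hmB hx hy hxy) (aux_nonneg_exp_sub hb hx)
      (le_trans (aux_nonneg_exp_sub ha hx) (hmA hx hy hxy))
  have hABn : ∀ ⦃x : ℝ⦄, x ∈ Set.Ici (0:ℝ) →
      0 ≤ ((fun s : ℝ => Real.exp (a * s) - 1) * (fun s : ℝ => Real.exp (b * s) - 1)) x := by
    intro x hx
    exact mul_nonneg (aux_nonneg_exp_sub ha hx) (aux_nonneg_exp_sub hb hx)
  have hCn : ∀ ⦃x : ℝ⦄, x ∈ Set.Ici (0:ℝ) → 0 ≤ Real.exp (c * x) :=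
    fun x _ => (Real.exp_pos _).le
  have := hAB.mul hC hABn hCn (aux_monovary hmAB (aux_mono_exp_mul hc))
  exact this

/-- Main theorem helper: the image of `Ioi 0` under `t ↦ 1/t` is `Ioi 0`. -/
lemma aux_image_inv : (fun t : ℝ => 1 / t) '' Set.Ioi (0:ℝ) = Set.Ioi (0:ℝ) := by
  ext y
  constructor
  · rintro ⟨t, ht, rfl⟩
    exact Set.mem_Ioi.2 (one_div_pos.2 (Set.mem_Ioi.1 ht))
  · intro hy
    exact ⟨1 / y, Set.mem_Ioi.2 (one_div_pos.2 (Set.mem_Ioi.1 hy)), by simp [one_div_one_div]⟩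

/-- For all constants `a ≥ 0`, `b ≥ 0`, `c ≥ 0`, the function
`t ↦ (e^{a/t} − 1)·(e^{b/t} − 1)·e^{c/t}` is convex on `(0, ∞)`. -/
theorem stmt_18 (a b c : ℝ) (ha : 0 ≤ a) (hb : 0 ≤ b) (hc : 0 ≤ c) :
    ConvexOn ℝ (Set.Ioi (0 : ℝ))
      (fun t : ℝ => (Real.exp (a / t) - 1) * (Real.exp (b / t) - 1) * Real.exp (c / t)) := by
  set g : ℝ → ℝ := fun s => (Real.exp (a * s) - 1) * (Real.exp (b * s) - 1) * Real.exp (c * s)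
  have hg : ConvexOn ℝ (Set.Ici (0:ℝ)) g := aux_g_convex ha hb hc
  have hmg : MonotoneOn g (Set.Ici (0:ℝ)) := by
    have hmA : MonotoneOn (fun s : ℝ => Real.exp (a * s) - 1) (Set.Ici (0:ℝ)) := by
      intro x hx y hy hxy; have := aux_mono_exp_mul ha hx hy hxy; simpa using this
    have hmB : MonotoneOn (fun s : ℝ => Real.exp (b * s) - 1) (Set.Ici (0:ℝ)) := by
      intro x hx y hy hxy; have := aux_mono_exp_mul hb hx hy hxy; simpa using this
    intro x hx y hy hxy
    have h1 : Real.exp (a * x) - 1 ≤ Real.exp (a * y) - 1 := hmA hx hy hxy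
    have h2 : Real.exp (b * x) - 1 ≤ Real.exp (b * y) - 1 := hmB hx hy hxy
    have h3 : Real.exp (c * x) ≤ Real.exp (c * y) := aux_mono_exp_mul hc hx hy hxy
    have n1 := aux_nonneg_exp_sub ha hx
    have n2 := aux_nonneg_exp_sub hb hx
    have n1' : (0:ℝ) ≤ Real.exp (a * y) - 1 := le_trans n1 h1
    have n2' : (0:ℝ) ≤ Real.exp (b * y) - 1 := le_trans n2 h2
    have : (Real.exp (a * x) - 1) * (Real.exp (b * x) - 1)
        ≤ (Real.exp (a * y) - 1) * (Real.exp (b * y) - 1) := mul_le_mul h1 h2 n2 n1'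
    exact mul_le_mul this h3 (Real.exp_pos _).le (mul_nonneg n1' n2')
  set f : ℝ → ℝ := fun t => 1 / t
  have hf : ConvexOn ℝ (Set.Ioi (0:ℝ)) f := by
    have h := convexOn_zpow (𝕜 := ℝ) (-1)
    refine ⟨convex_Ioi 0, fun x hx y hy p q hp hq hpq => ?_⟩
    have := h.2 hx hy hp hq hpq
    have hx' : (x:ℝ) ^ (-1 : ℤ) = 1 / x := by simp [zpow_neg, one_div]
    simpa [f, zpow_neg, one_div, smul_eq_mul] using this
  have himg : f '' Set.Ioi (0:ℝ) = Set.Ioi (0:ℝ) := aux_image_inv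
  have hg' : ConvexOn ℝ (f '' Set.Ioi (0:ℝ)) g := by
    rw [himg]; exact hg.subset Set.Ioi_subset_Ici_self (convex_Ioi 0)
  have hmg' : MonotoneOn g (f '' Set.Ioi (0:ℝ)) := by
    rw [himg]; exact hmg.mono Set.Ioi_subset_Ici_self
  have := hg'.comp hf hmg'
  convert this using 1
  funext t
  show _ = g (f t)
  simp only [g, f, mul_one_div]
end
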